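/- arXiv:1306.6199 — 3 statements merged into one kernel-verified Lean document; each statement's English description precedes it below -/
import Mathlib

section
/- Let φ : ℝ → ℝ be continuously differentiable and increasing, and suppose there exist constants c, C, R > 0 such that c|x| ≤ |φ(x)| ≤ C|x| whenever |x| ≥ R. Then the potential ω_{φ'}(z) = ∫_ℝ log*|1 − z/t| φ'(t) dt is a continuous function of z on all of ℂ. -/
open MeasureTheory Set intervalIntegral

/-- The modified logarithm `log*|1 - z/t|`. -/
noncomputable def logStar (z : ℂ) (t : ℝ) : ℝ :=
  if 1 < |t| then Real.log (‖1 - z / (t : ℂ)‖) + z.re / t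
  else Real.log (‖1 - z / (t : ℂ)‖)

/-- The potential `ω_γ(z) = ∫ log*|1 - z/t| γ(t) dt`. -/
noncomputable def pot (γ : ℝ → ℝ) (z : ℂ) : ℝ :=
  ∫ t : ℝ, logStar z t * γ t



lemma absLog_intervalIntegrable (a b : ℝ) :
    IntervalIntegrable (fun s => |Real.log s|) volume a b := by
  suffices h : ∀ c : ℝ, 0 ≤ c → IntervalIntegrable (fun s => |Real.log s|) volume 0 c by
    have hneg : ∀ c : ℝ, 0 ≤ c → IntervalIntegrable (fun s => |Real.log s|) volume (-c) 0 := by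
      intro c hc
      have := ((IntervalIntegrable.iff_comp_neg).mp (h c hc))
      simp only [neg_zero] at this
      have h2 : (fun x : ℝ => |Real.log (-x)|) = fun x => |Real.log x| := by
        funext x; rw [Real.log_neg_eq_log]
      rw [h2] at this
      exact this.symm
    have hall : ∀ c : ℝ, IntervalIntegrable (fun s => |Real.log s|) volume 0 c := by
      intro c
      rcases le_or_gt 0 c with hc | hc
      · exact h c hc
      · have := hneg (-c) (by linarith)
        simp only [neg_neg] at this
        exact this.symm
    exact (hall a).symm.trans (hall b)
  intro c hc
  have hrpow : IntervalIntegrable (fun x : ℝ => 2 * x ^ (-(1/2) : ℝ) + max c 1) volume 0 c :=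
    ((intervalIntegrable_rpow' (by norm_num)).const_mul 2).add (intervalIntegrable_const)
  apply hrpow.mono_fun
  · exact (Real.measurable_log.norm.aestronglyMeasurable)
  · rw [Filter.EventuallyLE, ae_restrict_iff' measurableSet_uIoc]
    refine Filter.Eventually.of_forall (fun x hx => ?_)
    rw [uIoc_of_le hc] at hx
    obtain ⟨hx0, hxc⟩ := hx
    have hb : |Real.log x| ≤ 2 * x ^ (-(1/2) : ℝ) + max c 1 := by
      have hxpos : 0 < x := hx0
      rcases le_or_gt 1 x with h1 | h1
      · have : |Real.log x| = Real.log x := abs_of_nonneg (Real.log_nonneg h1)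
        rw [this]
        have h2 : Real.log x ≤ x - 1 := Real.log_le_sub_one_of_pos hxpos
        have h3 : x ≤ max c 1 := le_trans hxc (le_max_left _ _)
        have h4 : 0 ≤ 2 * x ^ (-(1/2) : ℝ) := by positivity
        linarith
      · have hneg : Real.log x < 0 := Real.log_neg hxpos h1
        have : |Real.log x| = -Real.log x := abs_of_neg hneg
        rw [this]
        have key : -Real.log x ≤ 2 * x ^ (-(1/2) : ℝ) := by
          have h5 : Real.log (x ^ (-(1/2) : ℝ)) = (-(1/2)) * Real.log x := Real.log_rpow hxpos _
          have h6 : Real.log (x ^ (-(1/2) : ℝ)) ≤ x ^ (-(1/2) : ℝ) - 1 :=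
            Real.log_le_sub_one_of_pos (Real.rpow_pos_of_pos hxpos _)
          have h7 : (0:ℝ) ≤ x ^ (-(1/2) : ℝ) := le_of_lt (Real.rpow_pos_of_pos hxpos _)
          nlinarith
        have h8 : (0:ℝ) ≤ max c 1 := le_trans zero_le_one (le_max_right _ _)
        linarith
    calc ‖|Real.log x|‖ = |Real.log x| := by rw [Real.norm_eq_abs, abs_abs]
      _ ≤ 2 * x ^ (-(1/2) : ℝ) + max c 1 := hb
      _ ≤ ‖2 * x ^ (-(1/2) : ℝ) + max c 1‖ := le_abs_self _



lemma deriv_nonneg_of_mono {φ : ℝ → ℝ} (hd : Differentiable ℝ φ) (hm : Monotone φ)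
    (x : ℝ) : 0 ≤ deriv φ x := by
  have h := (hd x).hasDerivAt
  rw [hasDerivAt_iff_tendsto_slope] at h
  have hsub : Ioi x ⊆ {x}ᶜ := fun y hy => ne_of_gt hy
  have h' := h.mono_left (nhdsWithin_mono x hsub)
  refine ge_of_tendsto h' ?_
  filter_upwards [self_mem_nhdsWithin] with y hy
  have hxy : x < y := hy
  have h1 : φ x ≤ φ y := hm hxy.le
  have h2 : 0 < y - x := by linarith
  rw [slope_def_field]
  exact div_nonneg (by linarith) h2.le

/-- Key integration by parts bound. -/
lemma byparts_bound {φ : ℝ → ℝ} (hφ : ContDiff ℝ 1 φ) {C T u v : ℝ}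
    (hC : 0 ≤ C) (hT : 0 < T) (huv : u ≤ v)
    (habs : ∀ t ∈ Icc u v, T ≤ |t|)
    (hphi : ∀ t ∈ Icc u v, |φ t| ≤ C * |t|) :
    ∫ t in u..v, deriv φ t / t ^ 2 ≤ 4 * C / T := by
  have hne : ∀ t ∈ Icc u v, t ≠ 0 := by
    intro t ht h0
    have := habs t ht; rw [h0, abs_zero] at this; linarith
  have hder : ∀ t ∈ Icc u v,
      HasDerivAt (fun s => φ s / s ^ 2) (deriv φ t / t ^ 2 - 2 * φ t / t ^ 3) t := by
    intro t ht
    have h1 : HasDerivAt φ (deriv φ t) t :=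
      ((hφ.differentiable one_ne_zero) t).hasDerivAt
    have h2 : HasDerivAt (fun s : ℝ => s ^ 2) (2 * t) t := by
      simpa using (hasDerivAt_pow 2 t)
    have h3 := h1.div h2 (pow_ne_zero 2 (hne t ht))
    refine h3.congr_deriv ?_
    have ht0 := hne t ht
    field_simp
  have hcontD : ContinuousOn (fun t => deriv φ t / t ^ 2) (Icc u v) :=
    ((hφ.continuous_deriv le_rfl).continuousOn).div
      (continuousOn_pow 2) (fun t ht => pow_ne_zero 2 (hne t ht))
  have hcontP : ContinuousOn (fun t => 2 * φ t / t ^ 3) (Icc u v) :=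
    ((continuousOn_const.mul (hφ.continuous.continuousOn)).div
      (continuousOn_pow 3) (fun t ht => pow_ne_zero 3 (hne t ht)))
  have hcontG : ContinuousOn (fun t => deriv φ t / t ^ 2 - 2 * φ t / t ^ 3) (Icc u v) :=
    hcontD.sub hcontP
  have hintG : IntervalIntegrable (fun t => deriv φ t / t ^ 2 - 2 * φ t / t ^ 3) volume u v := by
    apply ContinuousOn.intervalIntegrable; rwa [uIcc_of_le huv]
  have hintD : IntervalIntegrable (fun t => deriv φ t / t ^ 2) volume u v := by
    apply ContinuousOn.intervalIntegrable; rwa [uIcc_of_le huv]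
  have hintP : IntervalIntegrable (fun t => 2 * φ t / t ^ 3) volume u v := by
    apply ContinuousOn.intervalIntegrable; rwa [uIcc_of_le huv]
  have hfund : ∫ t in u..v, (deriv φ t / t ^ 2 - 2 * φ t / t ^ 3) =
      φ v / v ^ 2 - φ u / u ^ 2 := by
    apply integral_eq_sub_of_hasDerivAt
    · intro t ht; rw [uIcc_of_le huv] at ht; exact hder t ht
    · exact hintG
  have hsplit : ∫ t in u..v, deriv φ t / t ^ 2 =
      (φ v / v ^ 2 - φ u / u ^ 2) + ∫ t in u..v, 2 * φ t / t ^ 3 := by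
    rw [← hfund, ← intervalIntegral.integral_add hintG hintP]
    congr 1; funext t; ring
  rw [hsplit]
  have hu0 := hne u ⟨le_rfl, huv⟩
  have hv0 := hne v ⟨huv, le_rfl⟩
  have hTu : T ≤ |u| := habs u ⟨le_rfl, huv⟩
  have hTv : T ≤ |v| := habs v ⟨huv, le_rfl⟩
  have hv2 : (0:ℝ) < v ^ 2 := by positivity
  have hu2 : (0:ℝ) < u ^ 2 := by positivity
  have h1 : φ v / v ^ 2 ≤ C / T := by
    rw [div_le_div_iff₀ hv2 hT]
    have := hphi v ⟨huv, le_rfl⟩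
    nlinarith [le_abs_self (φ v), sq_abs v, abs_nonneg v, abs_nonneg (φ v)]
  have h2 : -(φ u / u ^ 2) ≤ C / T := by
    rw [neg_div' , div_le_div_iff₀ hu2 hT]
    have := hphi u ⟨le_rfl, huv⟩
    nlinarith [neg_abs_le (φ u), sq_abs u, abs_nonneg u, abs_nonneg (φ u)]
  -- pointwise bound for the remaining integral
  have hpoint : ∀ t ∈ Icc u v, 2 * φ t / t ^ 3 ≤ 2 * C / t ^ 2 := by
    intro t ht
    have ht0 := hne t ht
    have hTt := habs t ht
    have hphit := hphi t ht
    have habs3 : |2 * φ t / t ^ 3| = 2 * |φ t| / |t| ^ 3 := by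
      rw [abs_div, abs_mul, abs_pow, abs_two]
    refine le_trans (le_abs_self _) ?_
    rw [habs3]
    have htpos : 0 < |t| := abs_pos.mpr ht0
    rw [div_le_div_iff₀ (by positivity) (by positivity)]
    have h22 : t ^ 2 = |t| ^ 2 := (sq_abs t).symm
    nlinarith [abs_nonneg (φ t), pow_pos htpos 3, pow_pos htpos 2]
  have hint2C : IntervalIntegrable (fun t => 2 * C / t ^ 2) volume u v := by
    apply ContinuousOn.intervalIntegrable
    rw [uIcc_of_le huv]
    exact continuousOn_const.div (continuousOn_pow 2) (fun t ht => pow_ne_zero 2 (hne t ht))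
  have hmono : ∫ t in u..v, 2 * φ t / t ^ 3 ≤ ∫ t in u..v, 2 * C / t ^ 2 :=
    intervalIntegral.integral_mono_on huv hintP hint2C hpoint
  have hderInv : ∀ t ∈ uIcc u v, HasDerivAt (fun s => -(2 * C) / s) (2 * C / t ^ 2) t := by
    intro t ht
    rw [uIcc_of_le huv] at ht
    have ht0 := hne t ht
    have h4 := (hasDerivAt_inv ht0).const_mul (-(2 * C))
    have heq : (fun s : ℝ => -(2 * C) / s) = fun s : ℝ => -(2 * C) * s⁻¹ := by
      funext s; rw [div_eq_mul_inv]
    rw [heq]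
    refine h4.congr_deriv ?_
    ring
  have hcomp : ∫ t in u..v, 2 * C / t ^ 2 = -(2 * C) / v - -(2 * C) / u :=
    integral_eq_sub_of_hasDerivAt hderInv hint2C
  have hsign : 0 < u ∨ v < 0 := by
    by_contra hcon
    push_neg at hcon
    exact hne 0 ⟨hcon.1, hcon.2⟩ rfl
  have h3 : -(2 * C) / v - -(2 * C) / u ≤ 2 * C / T := by
    rcases hsign with hu | hv
    · have huT : T ≤ u := by rwa [abs_of_pos hu] at hTu
      have hvpos : 0 < v := lt_of_lt_of_le hu huv
      have e1 : -(2 * C) / v ≤ 0 := by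
        rw [neg_div]
        have : 0 ≤ 2 * C / v := by positivity
        linarith
      have e3 : 2 * C / u ≤ 2 * C / T :=
        div_le_div_of_nonneg_left (by linarith) hT huT
      have e2 : -(-(2 * C) / u) = 2 * C / u := by ring
      linarith [e2 ▸ le_refl (-(-(2 * C) / u))]
    · have hvT : T ≤ -v := by rwa [abs_of_neg hv] at hTv
      have hupos : u < 0 := lt_of_le_of_lt huv hv
      have e1 : -(2 * C) / v = 2 * C / (-v) := by
        rw [show v = -(-v) by ring, div_neg, neg_div, neg_neg, neg_neg]
      have e2 : 2 * C / (-v) ≤ 2 * C / T :=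
        div_le_div_of_nonneg_left (by linarith) hT hvT
      have e4 : -(2 * C) / u ≥ 0 := by
        rw [show u = -(-u) by ring, div_neg, neg_div, neg_neg]
        exact div_nonneg (by linarith) (by linarith)
      have e2' : -(2 * C) / v ≤ 2 * C / T := by rw [e1]; exact e2
      linarith
  have hI : ∫ t in u..v, 2 * C / t ^ 2 ≤ 2 * C / T := by rw [hcomp]; exact h3
  have hlast : ∫ t in u..v, 2 * φ t / t ^ 3 ≤ 2 * C / T := le_trans hmono hI
  have r1 : 2 * C / T = 2 * (C / T) := by ring
  have r2 : 4 * C / T = 4 * (C / T) := by ring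
  linarith



lemma tail_integrable_Ioi {φ : ℝ → ℝ} (hφ : ContDiff ℝ 1 φ) (hm : Monotone φ)
    {C T : ℝ} (hC : 0 ≤ C) (hT : 0 < T)
    (hphi : ∀ t : ℝ, T ≤ |t| → |φ t| ≤ C * |t|) :
    IntegrableOn (fun t => deriv φ t / t ^ 2) (Ioi T) volume := by
  have hcont : Continuous (deriv φ) := hφ.continuous_deriv le_rfl
  have hd : Differentiable ℝ φ := hφ.differentiable one_ne_zero
  have hconDiv : ∀ u v : ℝ, (∀ t ∈ Icc u v, t ≠ 0) →
      ContinuousOn (fun t => deriv φ t / t ^ 2) (Icc u v) := fun u v hne =>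
    (hcont.continuousOn.div (continuousOn_pow 2) (fun t ht => pow_ne_zero 2 (hne t ht)))
  apply integrableOn_Ioi_of_intervalIntegral_norm_bounded (4 * C / T) T
    (b := fun i : ℝ => i) (l := Filter.atTop)
  · intro i
    rcases le_or_gt i T with hi | hi
    · rw [Set.Ioc_eq_empty (by exact fun h => absurd h (not_lt.mpr hi))]
      exact integrableOn_empty
    · refine IntegrableOn.mono_set ?_ Ioc_subset_Icc_self
      refine (hconDiv T i (fun t ht => ?_)).integrableOn_Icc
      have := ht.1; intro h0; rw [h0] at this; linarith
  · exact fun ⦃s⦄ h => h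
  · filter_upwards [Filter.eventually_ge_atTop T] with i hi
    have hne : ∀ t ∈ Icc T i, T ≤ |t| := by
      intro t ht
      rw [abs_of_pos (lt_of_lt_of_le hT ht.1)]
      exact ht.1
    have hcongr : ∫ t in T..i, ‖deriv φ t / t ^ 2‖ = ∫ t in T..i, deriv φ t / t ^ 2 := by
      apply intervalIntegral.integral_congr
      intro t ht
      simp only [Real.norm_eq_abs]
      rw [abs_of_nonneg (div_nonneg (deriv_nonneg_of_mono hd hm t) (sq_nonneg t))]
    rw [hcongr]
    exact byparts_bound hφ hC hT hi hne (fun t ht => hphi t (hne t ht))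

lemma tail_integrable_Iic {φ : ℝ → ℝ} (hφ : ContDiff ℝ 1 φ) (hm : Monotone φ)
    {C T : ℝ} (hC : 0 ≤ C) (hT : 0 < T)
    (hphi : ∀ t : ℝ, T ≤ |t| → |φ t| ≤ C * |t|) :
    IntegrableOn (fun t => deriv φ t / t ^ 2) (Iic (-T)) volume := by
  have hcont : Continuous (deriv φ) := hφ.continuous_deriv le_rfl
  have hd : Differentiable ℝ φ := hφ.differentiable one_ne_zero
  have hconDiv : ∀ u v : ℝ, (∀ t ∈ Icc u v, t ≠ 0) →
      ContinuousOn (fun t => deriv φ t / t ^ 2) (Icc u v) := fun u v hne =>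
    (hcont.continuousOn.div (continuousOn_pow 2) (fun t ht => pow_ne_zero 2 (hne t ht)))
  apply integrableOn_Iic_of_intervalIntegral_norm_bounded (4 * C / T) (-T)
    (a := fun i : ℝ => -i) (l := Filter.atTop)
  · intro i
    rcases le_or_gt i T with hi | hi
    · rw [Set.Ioc_eq_empty (by intro h; linarith [h])]
      exact integrableOn_empty
    · refine IntegrableOn.mono_set ?_ Ioc_subset_Icc_self
      refine (hconDiv (-i) (-T) (fun t ht => ?_)).integrableOn_Icc
      have := ht.2; intro h0; rw [h0] at this; linarith
  · exact Filter.tendsto_neg_atTop_atBot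
  · filter_upwards [Filter.eventually_ge_atTop T] with i hi
    have habs : ∀ t ∈ Icc (-i) (-T), T ≤ |t| := by
      intro t ht
      have ht2 := ht.2
      rw [abs_of_neg (by linarith : t < 0)]
      linarith
    have hcongr : ∫ t in (-i)..(-T), ‖deriv φ t / t ^ 2‖ = ∫ t in (-i)..(-T), deriv φ t / t ^ 2 := by
      apply intervalIntegral.integral_congr
      intro t ht
      simp only [Real.norm_eq_abs]
      rw [abs_of_nonneg (div_nonneg (deriv_nonneg_of_mono hd hm t) (sq_nonneg t))]
    rw [hcongr]
    exact byparts_bound hφ hC hT (by linarith) habs (fun t ht => hphi t (habs t ht))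




lemma measurable_logStar (z : ℂ) : Measurable (logStar z) := by
  unfold logStar
  have h1 : Measurable fun t : ℝ => Real.log ‖1 - z / (t : ℂ)‖ := by
    apply Real.measurable_log.comp
    apply continuous_norm.measurable.comp
    exact measurable_const.sub (Complex.measurable_ofReal.const_div z)
  have h2 : Measurable fun t : ℝ => z.re / t := by
    simp only [div_eq_mul_inv]
    exact measurable_inv.const_mul z.re
  exact Measurable.ite (isOpen_lt continuous_const (_root_.continuous_abs : Continuous fun t : ℝ => |t|)).measurableSet (h1.add h2) h1

lemma abs_one_sub_div (z : ℂ) {t : ℝ} (ht : t ≠ 0) :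
    ‖1 - z / (t : ℂ)‖ = ‖(t : ℂ) - z‖ / |t| := by
  have ht' : (t : ℂ) ≠ 0 := Complex.ofReal_ne_zero.mpr ht
  have h : (1 : ℂ) - z / t = ((t : ℂ) - z) / t := by field_simp
  rw [h, norm_div, Complex.norm_real, Real.norm_eq_abs]

lemma logStar_bound_S {z : ℂ} {t r T K : ℝ} (hr : ‖z‖ ≤ r) (hr0 : 0 ≤ r)
    (ht0 : t ≠ 0) (htx : t ≠ z.re) (hT : |t| ≤ T) (hK : T + r ≤ K) (hK1 : 1 ≤ K) :
    |logStar z t| ≤ Real.log K + |Real.log (t - z.re)| + |Real.log t| + r := by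
  have htz : (t : ℂ) ≠ z := by
    intro h
    apply htx
    rw [← h, Complex.ofReal_re]
  set d := ‖(t : ℂ) - z‖ with hd
  have hdpos : 0 < d := by
    have : (t : ℂ) - z ≠ 0 := sub_ne_zero.mpr htz
    simpa [hd] using (norm_pos_iff.mpr this)
  have hre : ((t : ℂ) - z).re = t - z.re := by simp
  have hd_re : |t - z.re| ≤ d := by
    rw [← hre]; exact Complex.abs_re_le_norm _
  have htxpos : 0 < |t - z.re| := abs_pos.mpr (sub_ne_zero.mpr htx)
  have hdK : d ≤ K := by
    calc d ≤ ‖(t : ℂ)‖ + ‖z‖ := by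
            simpa [hd] using
              (norm_sub_le (t : ℂ) z)
      _ ≤ |t| + r := by rw [Complex.norm_real, Real.norm_eq_abs]; linarith
      _ ≤ K := by linarith
  have hlogK0 : 0 ≤ Real.log K := Real.log_nonneg hK1
  have habs_logd : |Real.log d| ≤ Real.log K + |Real.log (t - z.re)| := by
    have hup : Real.log d ≤ Real.log K := Real.log_le_log hdpos hdK
    have hlo : Real.log |t - z.re| ≤ Real.log d := Real.log_le_log htxpos hd_re
    rw [Real.log_abs] at hlo
    rw [abs_le]
    constructor
    · have : -|Real.log (t - z.re)| ≤ Real.log (t - z.re) := neg_abs_le _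
      linarith
    · have : 0 ≤ |Real.log (t - z.re)| := abs_nonneg _
      linarith
  have hmain : |Real.log ‖1 - z / (t : ℂ)‖| ≤
      Real.log K + |Real.log (t - z.re)| + |Real.log t| := by
    rw [abs_one_sub_div z ht0, Real.log_div (ne_of_gt hdpos) (abs_ne_zero.mpr ht0),
      Real.log_abs]
    calc |Real.log d - Real.log t| ≤ |Real.log d| + |Real.log t| := (by simpa only [Real.norm_eq_abs] using norm_sub_le (Real.log d) (Real.log t))
      _ ≤ Real.log K + |Real.log (t - z.re)| + |Real.log t| := by linarith
  unfold logStar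
  split_ifs with h1t
  · have hrt : |z.re / t| ≤ r := by
      rw [abs_div]
      have h1 : |z.re| ≤ r := le_trans (Complex.abs_re_le_norm z) hr
      have h2 : (1 : ℝ) ≤ |t| := le_of_lt h1t
      calc |z.re| / |t| ≤ |z.re| / 1 := by
            apply div_le_div_of_nonneg_left (abs_nonneg _) one_pos h2
        _ = |z.re| := div_one _
        _ ≤ r := h1
    calc |Real.log ‖1 - z / (t : ℂ)‖ + z.re / t|
        ≤ |Real.log ‖1 - z / (t : ℂ)‖| + |z.re / t| := abs_add_le _ _
      _ ≤ Real.log K + |Real.log (t - z.re)| + |Real.log t| + r := by linarith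
  · have : (0:ℝ) ≤ r := hr0
    linarith [hmain]

lemma logStar_tail_bound {z : ℂ} {t r : ℝ} (hr : ‖z‖ ≤ r) (hr0 : 0 ≤ r)
    (ht : 2 * r + 2 ≤ |t|) :
    |logStar z t| ≤ 2 * r ^ 2 / t ^ 2 := by
  have h1t : 1 < |t| := by linarith
  have ht0 : t ≠ 0 := by
    intro h; rw [h, abs_zero] at h1t; linarith
  set w := z / (t : ℂ) with hw
  have habsw : ‖w‖ = ‖z‖ / |t| := by
    rw [hw, norm_div, Complex.norm_real, Real.norm_eq_abs]
  have habspos : (0:ℝ) < |t| := by linarith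
  have hwle : ‖w‖ ≤ 1 / 2 := by
    rw [habsw]
    calc ‖z‖ / |t| ≤ r / (2 * r + 2) :=
          div_le_div₀ hr0 hr (by linarith) ht
      _ ≤ 1 / 2 := by
          rw [div_le_div_iff₀ (by linarith) (by norm_num)]
          linarith
  have hwlt : ‖-w‖ < 1 := by
    rw [norm_neg]
    linarith
  have key : Real.log ‖1 - w‖ + w.re = (Complex.log (1 - w) + w).re := by
    rw [Complex.add_re, Complex.log_re]
  have hre : z.re / t = w.re := by
    rw [hw]
    exact (Complex.div_ofReal_re z t).symm
  have hds : logStar z t = (Complex.log (1 - w) + w).re := by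
    unfold logStar
    rw [if_pos h1t, hre, ← key, hw]
  rw [hds]
  have hb1 : |(Complex.log (1 - w) + w).re| ≤ ‖Complex.log (1 - w) + w‖ :=
    Complex.abs_re_le_norm _
  have heq2 : Complex.log (1 - w) + w = Complex.log (1 + (-w)) - (-w) := by
    rw [sub_neg_eq_add, sub_eq_add_neg]
  have hb2 : ‖Complex.log (1 + (-w)) - (-w)‖ ≤ ‖-w‖ ^ 2 * (1 - ‖-w‖)⁻¹ / 2 :=
    Complex.norm_log_one_add_sub_self_le hwlt
  have hinv : (1 - ‖-w‖)⁻¹ ≤ 2 := by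
    rw [norm_neg]
    have h1 : (0:ℝ) < 1 - ‖w‖ := by linarith
    rw [inv_le_comm₀ h1 (by norm_num)]
    linarith
  have hn : ‖-w‖ = ‖w‖ := by rw [norm_neg]
  have hfin : ‖-w‖ ^ 2 * (1 - ‖-w‖)⁻¹ / 2 ≤ ‖w‖ ^ 2 := by
    rw [hn]
    have h0 : (0:ℝ) ≤ ‖w‖ ^ 2 := sq_nonneg _
    have hinvnn : 0 ≤ (1 - ‖w‖)⁻¹ := by
      apply inv_nonneg.mpr
      have := norm_nonneg w
      linarith
    rw [hn] at hinv
    nlinarith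
  have hsquare : ‖w‖ ^ 2 ≤ r ^ 2 / t ^ 2 := by
    rw [habsw, div_pow, _root_.sq_abs]
    apply div_le_div_of_nonneg_right ?_ (by positivity)
    · exact pow_le_pow_left₀ (norm_nonneg z) hr 2
  calc |(Complex.log (1 - w) + w).re| ≤ ‖Complex.log (1 - w) + w‖ := hb1
    _ = ‖Complex.log (1 + (-w)) - (-w)‖ := by rw [heq2]
    _ ≤ ‖-w‖ ^ 2 * (1 - ‖-w‖)⁻¹ / 2 := hb2
    _ ≤ ‖w‖ ^ 2 := hfin
    _ ≤ r ^ 2 / t ^ 2 := hsquare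
    _ ≤ 2 * r ^ 2 / t ^ 2 := by
        apply div_le_div_of_nonneg_right ?_ (by positivity)
        nlinarith




lemma continuousAt_logStar {z₀ : ℂ} {t : ℝ} (ht0 : t ≠ 0) (htz : (t : ℂ) ≠ z₀) :
    ContinuousAt (fun z => logStar z t) z₀ := by
  have ht' : (t : ℂ) ≠ 0 := Complex.ofReal_ne_zero.mpr ht0
  have hne : ‖1 - z₀ / (t : ℂ)‖ ≠ 0 := by
    intro h
    rw [norm_eq_zero, sub_eq_zero] at h
    apply htz
    field_simp at h
    rw [h]
  have hc1 : ContinuousAt (fun z : ℂ => Real.log ‖1 - z / (t : ℂ)‖) z₀ := by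
    have hin : ContinuousAt (fun z : ℂ => ‖1 - z / (t : ℂ)‖) z₀ :=
      (continuous_norm.continuousAt).comp
        ((continuous_const.sub (continuous_id.div_const (t : ℂ))).continuousAt)
    have hcomp := ContinuousAt.comp (f := fun z : ℂ => ‖1 - z / (t : ℂ)‖)
      (x := z₀) (Real.continuousAt_log hne) hin
    exact hcomp
  have hc2 : ContinuousAt (fun z : ℂ => z.re / t) z₀ :=
    (Complex.continuous_re.continuousAt).div_const t
  unfold logStar
  split_ifs with h
  · exact hc1.add hc2
  · exact hc1

lemma setIntegral_Icc_shift (f : ℝ → ℝ) {a b : ℝ} (x : ℝ) (hab : a ≤ b) :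
    ∫ t in Icc (a + x) (b + x), f (t - x) = ∫ t in Icc a b, f t := by
  have h1 : a + x ≤ b + x := by linarith
  rw [MeasureTheory.integral_Icc_eq_integral_Ioc, MeasureTheory.integral_Icc_eq_integral_Ioc,
    ← intervalIntegral.integral_of_le h1, ← intervalIntegral.integral_of_le hab,
    intervalIntegral.integral_comp_sub_right f x, add_sub_cancel_right, add_sub_cancel_right]



lemma ae_ne_pair (x y : ℝ) : ∀ᵐ t : ℝ, t ≠ x ∧ t ≠ y := by
  have h : volume ({x, y} : Set ℝ) = 0 := (Set.toFinite _).countable.measure_zero _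
  have h2 := (measure_eq_zero_iff_ae_notMem (μ := volume) (s := ({x, y} : Set ℝ))).mp h
  filter_upwards [h2] with t ht
  simp only [Set.mem_insert_iff, Set.mem_singleton_iff] at ht
  push_neg at ht
  exact ht

lemma absLog_shift_integrableOn (x : ℝ) {a b : ℝ} (hab : a ≤ b) :
    IntegrableOn (fun t => |Real.log (t - x)|) (Icc a b) volume := by
  have h := (absLog_intervalIntegrable (a - x) (b - x)).comp_sub_right x
  simp only [sub_add_cancel] at h
  rwa [intervalIntegrable_iff_integrableOn_Icc_of_le hab] at h


set_option maxHeartbeats 3000000 in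
theorem stmt_1 (φ : ℝ → ℝ) (hφ : ContDiff ℝ 1 φ) (hmono : StrictMono φ)
    (c C R : ℝ) (hc : 0 < c) (hC : 0 < C) (hR : 0 < R)
    (hbound : ∀ x : ℝ, R ≤ |x| → c * |x| ≤ |φ x| ∧ |φ x| ≤ C * |x|) :
    Continuous (pot (deriv φ)) := by
  rw [continuous_iff_continuousAt]
  intro z₀
  have hγc : Continuous (deriv φ) := hφ.continuous_deriv le_rfl
  have hγ0 : ∀ t, 0 ≤ deriv φ t :=
    deriv_nonneg_of_mono (hφ.differentiable one_ne_zero) hmono.monotone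
  set x₀ : ℝ := z₀.re with hx₀
  set r : ℝ := ‖z₀‖ + 1 with hrdef
  have habsnn : 0 ≤ ‖z₀‖ := norm_nonneg z₀
  have hr0 : 0 < r := by rw [hrdef]; linarith
  have hr1 : 1 ≤ r := by rw [hrdef]; linarith
  have habsz₀ : ‖z₀‖ < r := by rw [hrdef]; linarith
  set T : ℝ := 2 * r + R + 2 with hTdef
  have hT0 : 0 < T := by rw [hTdef]; linarith
  have hT1 : 1 ≤ T := by rw [hTdef]; linarith
  have hRT : R ≤ T := by rw [hTdef]; linarith
  have h2r2 : 2 * r + 2 ≤ T := by rw [hTdef]; linarith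
  have hrT : r ≤ T := by rw [hTdef]; linarith
  set K : ℝ := T + r with hKdef
  have hK1 : 1 ≤ K := by rw [hKdef]; linarith
  have hlogK0 : 0 ≤ Real.log K := Real.log_nonneg hK1
  set S : Set ℝ := Icc (-T) T with hSdef
  have hSm : MeasurableSet S := measurableSet_Icc
  obtain ⟨M0, hM0⟩ :=
    (isCompact_Icc (a := -T) (b := T)).exists_bound_of_continuousOn hγc.continuousOn
  set M : ℝ := max M0 0 with hMdef
  have hM : ∀ t ∈ S, deriv φ t ≤ M := by
    intro t ht
    have h1 := hM0 t ht
    rw [Real.norm_eq_abs] at h1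
    calc deriv φ t ≤ |deriv φ t| := le_abs_self _
      _ ≤ M0 := h1
      _ ≤ M := le_max_left _ _
  have hM_0 : 0 ≤ M := le_max_right _ _
  set F : ℂ → ℝ → ℝ := fun z t => logStar z t * deriv φ t with hFdef
  have hFm : ∀ z, Measurable (F z) := fun z => (measurable_logStar z).mul hγc.measurable
  have habs_compl : ∀ t ∈ Sᶜ, T < |t| := by
    intro t ht
    rw [hSdef] at ht
    simp only [Set.mem_compl_iff, Set.mem_Icc, not_and_or, not_le] at ht
    rcases ht with h | h
    · rw [abs_of_neg (by linarith)]; linarith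
    · rw [abs_of_pos (by linarith)]; linarith
  -- pointwise bound on S
  have hFS : ∀ z : ℂ, ‖z‖ ≤ r → ∀ t ∈ S, t ≠ 0 → t ≠ z.re →
      |F z t| ≤ (Real.log K + |Real.log (t - z.re)| + |Real.log t| + r) * M := by
    intro z hz t ht ht0 htx
    have htT : |t| ≤ T := abs_le.mpr ⟨ht.1, ht.2⟩
    have h1 : |logStar z t| ≤ Real.log K + |Real.log (t - z.re)| + |Real.log t| + r :=
      logStar_bound_S hz hr0.le ht0 htx htT (le_of_eq hKdef.symm) hK1
    calc |F z t| = |logStar z t| * |deriv φ t| := abs_mul _ _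
      _ = |logStar z t| * deriv φ t := by rw [abs_of_nonneg (hγ0 t)]
      _ ≤ (Real.log K + |Real.log (t - z.re)| + |Real.log t| + r) * M :=
          mul_le_mul h1 (hM t ht) (hγ0 t) (le_trans (abs_nonneg _) h1)
  -- integrable bound on S
  have hconst : ∀ a : ℝ, IntegrableOn (fun _ : ℝ => a) S volume := by
    intro a
    exact integrableOn_const (by rw [hSdef]; exact measure_Icc_lt_top.ne)
  have hTT : -T ≤ T := by linarith
  have hlogt_int : IntegrableOn (fun t : ℝ => |Real.log t|) S volume := by
    have := absLog_shift_integrableOn 0 hTT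
    simpa using this
  have hSbound_int : ∀ x : ℝ,
      IntegrableOn (fun t => (Real.log K + |Real.log (t - x)| + |Real.log t| + r) * M)
        S volume := by
    intro x
    apply Integrable.mul_const
    exact ((((hconst (Real.log K)).add (absLog_shift_integrableOn x hTT)).add
      hlogt_int).add (hconst r))
  have hIntS : ∀ z : ℂ, ‖z‖ ≤ r → IntegrableOn (F z) S volume := by
    intro z hz
    apply Integrable.mono' (hSbound_int z.re) ((hFm z).aestronglyMeasurable)
    filter_upwards [ae_restrict_mem hSm, ae_restrict_of_ae (ae_ne_pair 0 z.re)] with t htS htp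
    rw [Real.norm_eq_abs]
    exact hFS z hz t htS htp.1 htp.2
  -- tail integrability
  have hphiBound : ∀ t : ℝ, T ≤ |t| → |φ t| ≤ C * |t| := fun t ht =>
    (hbound t (le_trans hRT ht)).2
  have htailS : IntegrableOn (fun t => deriv φ t / t ^ 2) Sᶜ volume := by
    rw [hSdef]
    have hcompl : (Icc (-T) T)ᶜ = Iio (-T) ∪ Ioi T := by
      ext t
      simp only [Set.mem_compl_iff, Set.mem_Icc, not_and_or, not_le, Set.mem_union,
        Set.mem_Iio, Set.mem_Ioi]
    rw [hcompl]
    exact ((tail_integrable_Iic hφ hmono.monotone hC.le hT0 hphiBound).mono_set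
      Iio_subset_Iic_self).union (tail_integrable_Ioi hφ hmono.monotone hC.le hT0 hphiBound)
  have htailS2 : IntegrableOn (fun t => 2 * r ^ 2 * (deriv φ t / t ^ 2)) Sᶜ volume :=
    htailS.const_mul _
  have hFtail : ∀ z : ℂ, ‖z‖ ≤ r → ∀ t ∈ Sᶜ,
      |F z t| ≤ 2 * r ^ 2 * (deriv φ t / t ^ 2) := by
    intro z hz t ht
    have h1 : 2 * r + 2 ≤ |t| := le_trans h2r2 (habs_compl t ht).le
    have h2 := logStar_tail_bound hz hr0.le h1
    calc |F z t| = |logStar z t| * deriv φ t := by rw [abs_mul, abs_of_nonneg (hγ0 t)]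
      _ ≤ 2 * r ^ 2 / t ^ 2 * deriv φ t := mul_le_mul_of_nonneg_right h2 (hγ0 t)
      _ = 2 * r ^ 2 * (deriv φ t / t ^ 2) := by ring
  have hIntTail : ∀ z : ℂ, ‖z‖ ≤ r → IntegrableOn (F z) Sᶜ volume := by
    intro z hz
    apply Integrable.mono' htailS2 ((hFm z).aestronglyMeasurable)
    filter_upwards [ae_restrict_mem hSm.compl] with t ht
    rw [Real.norm_eq_abs]
    exact hFtail z hz t ht
  have hIntF : ∀ z : ℂ, ‖z‖ ≤ r → Integrable (F z) volume := by
    intro z hz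
    rw [← integrableOn_univ, ← Set.union_compl_self S]
    exact (hIntS z hz).union (hIntTail z hz)
  have hpot : ∀ z : ℂ, pot (deriv φ) z = ∫ t : ℝ, F z t := fun z => rfl
  have hsplit : ∀ z : ℂ, ‖z‖ ≤ r →
      pot (deriv φ) z = (∫ t in S, F z t) + (∫ t in Sᶜ, F z t) := by
    intro z hz
    rw [hpot z]
    exact (integral_add_compl hSm (hIntF z hz)).symm
  have hball : ∀ z : ℂ, dist z z₀ < 1 → ‖z‖ ≤ r := by
    intro z hz
    rw [Complex.dist_eq] at hz
    calc ‖z‖ = ‖z - z₀ + z₀‖ := by ring_nf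
      _ ≤ ‖z - z₀‖ + ‖z₀‖ := norm_add_le _ _
      _ ≤ r := by rw [hrdef]; linarith
  -- continuity of the tail part
  have hB : ContinuousAt (fun z => ∫ t in Sᶜ, F z t) z₀ := by
    have heq : (fun z => ∫ t in Sᶜ, F z t) = fun z => ∫ t : ℝ, Sᶜ.indicator (F z) t := by
      funext z; rw [MeasureTheory.integral_indicator hSm.compl]
    rw [heq]
    apply continuousAt_of_dominated
      (bound := Sᶜ.indicator (fun t => 2 * r ^ 2 * (deriv φ t / t ^ 2)))
    · exact Filter.Eventually.of_forall fun z =>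
        ((hFm z).indicator hSm.compl).aestronglyMeasurable
    · filter_upwards [Metric.ball_mem_nhds z₀ one_pos] with z hz
      apply Filter.Eventually.of_forall
      intro t
      by_cases ht : t ∈ Sᶜ
      · rw [Set.indicator_of_mem ht, Set.indicator_of_mem ht, Real.norm_eq_abs]
        exact hFtail z (hball z (Metric.mem_ball.mp hz)) t ht
      · rw [Set.indicator_of_notMem ht, Set.indicator_of_notMem ht, norm_zero]
    · rwa [integrable_indicator_iff hSm.compl]
    · apply Filter.Eventually.of_forall
      intro t
      by_cases ht : t ∈ Sᶜ
      · have htabs := habs_compl t ht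
        have ht0 : t ≠ 0 := by intro h; rw [h, abs_zero] at htabs; linarith
        have htz : (t : ℂ) ≠ z₀ := by
          intro h
          have h2 : ‖(t : ℂ)‖ = ‖z₀‖ := by rw [h]
          rw [Complex.norm_real, Real.norm_eq_abs] at h2
          rw [h2] at htabs
          linarith
        have hc2 : ContinuousAt (fun z => F z t) z₀ :=
          (continuousAt_logStar ht0 htz).mul continuousAt_const
        have heq2 : (fun z => Sᶜ.indicator (F z) t) = fun z => F z t := by
          funext z; rw [Set.indicator_of_mem ht]
        rw [heq2]; exact hc2
      · have heq2 : (fun z => Sᶜ.indicator (F z) t) = fun _ => (0:ℝ) := by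
          funext z; rw [Set.indicator_of_notMem ht]
        rw [heq2]; exact continuousAt_const
  -- continuity of the main part
  have hA : ContinuousAt (fun z => ∫ t in S, F z t) z₀ := by
    rw [Metric.continuousAt_iff]
    intro ε hε
    -- small integrals tend to zero
    have hG1int : Integrable ((Icc (-3:ℝ) 3).indicator fun s => Real.log K + |Real.log s|)
        volume := by
      rw [integrable_indicator_iff measurableSet_Icc]
      refine Integrable.add ?_ ?_
      · exact integrableOn_const measure_Icc_lt_top.ne
      · simpa [IntegrableOn] using absLog_shift_integrableOn 0 (by norm_num : (-3:ℝ) ≤ 3)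
    have hG2int : Integrable ((Icc (x₀-2) (x₀+2)).indicator fun s => |Real.log s| + r)
        volume := by
      rw [integrable_indicator_iff measurableSet_Icc]
      refine Integrable.add ?_ ?_
      · simpa [IntegrableOn] using absLog_shift_integrableOn 0 (by linarith : x₀ - 2 ≤ x₀ + 2)
      · exact integrableOn_const measure_Icc_lt_top.ne
    have hm1 : Filter.Tendsto (fun δ : ℝ => volume (Icc (-(3*δ)) (3*δ)))
        (nhdsWithin 0 (Set.Ioi 0)) (nhds 0) := by
      have h6 : Filter.Tendsto (fun δ : ℝ => (6:ℝ)*δ) (nhdsWithin 0 (Set.Ioi 0)) (nhds 0) := by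
        have h0 : Continuous (fun δ : ℝ => (6:ℝ)*δ) := continuous_const.mul continuous_id
        have := h0.tendsto 0
        simp only [mul_zero] at this
        exact this.mono_left nhdsWithin_le_nhds
      have h7 := (ENNReal.continuous_ofReal.tendsto 0).comp h6
      rw [ENNReal.ofReal_zero] at h7
      apply Filter.Tendsto.congr _ h7
      intro δ
      rw [Function.comp_apply, Real.volume_Icc]
      congr 1
      ring
    have hm2 : Filter.Tendsto (fun δ : ℝ => volume (Icc (x₀-2*δ) (x₀+2*δ)))
        (nhdsWithin 0 (Set.Ioi 0)) (nhds 0) := by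
      have h6 : Filter.Tendsto (fun δ : ℝ => (4:ℝ)*δ) (nhdsWithin 0 (Set.Ioi 0)) (nhds 0) := by
        have h0 : Continuous (fun δ : ℝ => (4:ℝ)*δ) := continuous_const.mul continuous_id
        have := h0.tendsto 0
        simp only [mul_zero] at this
        exact this.mono_left nhdsWithin_le_nhds
      have h7 := (ENNReal.continuous_ofReal.tendsto 0).comp h6
      rw [ENNReal.ofReal_zero] at h7
      apply Filter.Tendsto.congr _ h7
      intro δ
      rw [Function.comp_apply, Real.volume_Icc]
      congr 1
      ring
    have huInd := hG1int.tendsto_setIntegral_nhds_zero hm1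
    have hwInd := hG2int.tendsto_setIntegral_nhds_zero hm2
    have hsmall : Filter.Eventually (fun δ : ℝ => δ ∈ Set.Ioc (0:ℝ) 1)
        (nhdsWithin 0 (Set.Ioi 0)) :=
      Ioc_mem_nhdsGT_of_mem ⟨le_refl (0:ℝ), one_pos⟩
    have hu : Filter.Tendsto (fun δ : ℝ => ∫ t in Icc (-(3*δ)) (3*δ), (Real.log K + |Real.log t|))
        (nhdsWithin 0 (Set.Ioi 0)) (nhds 0) := by
      apply huInd.congr'
      filter_upwards [hsmall] with δ hδ
      apply setIntegral_congr_fun measurableSet_Icc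
      intro t ht
      have hsub : t ∈ Icc (-3:ℝ) 3 := by
        simp only [Set.mem_Icc] at ht ⊢
        obtain ⟨h1, h2⟩ := hδ
        constructor <;> nlinarith [ht.1, ht.2]
      rw [Set.indicator_of_mem hsub]
    have hw : Filter.Tendsto (fun δ : ℝ => ∫ t in Icc (x₀-2*δ) (x₀+2*δ), (|Real.log t| + r))
        (nhdsWithin 0 (Set.Ioi 0)) (nhds 0) := by
      apply hwInd.congr'
      filter_upwards [hsmall] with δ hδ
      apply setIntegral_congr_fun measurableSet_Icc
      intro t ht
      have hsub : t ∈ Icc (x₀-2) (x₀+2) := by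
        simp only [Set.mem_Icc] at ht ⊢
        obtain ⟨h1, h2⟩ := hδ
        constructor <;> nlinarith [ht.1, ht.2]
      rw [Set.indicator_of_mem hsub]
    have hq : Filter.Tendsto (fun δ : ℝ =>
        M * ((∫ t in Icc (-(3*δ)) (3*δ), (Real.log K + |Real.log t|)) +
          (∫ t in Icc (x₀-2*δ) (x₀+2*δ), (|Real.log t| + r))))
        (nhdsWithin 0 (Set.Ioi 0)) (nhds 0) := by
      have := (hu.add hw).const_mul M
      simpa using this
    have hqev := (Metric.tendsto_nhds.mp hq (ε/4) (by positivity)).and hsmall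
    obtain ⟨δ, hqδ, hδ0, hδ1⟩ := hqev.exists
    rw [Real.dist_eq, sub_zero] at hqδ
    set N : Set ℝ := Icc (x₀ - 2*δ) (x₀ + 2*δ) with hNdef
    have hNm : MeasurableSet N := measurableSet_Icc
    -- bound for the integral near the singularity
    have hAN : ∀ z : ℂ, ‖z‖ ≤ r → dist z z₀ < δ →
        |∫ t in S ∩ N, F z t| < ε/4 := by
      intro z hz hzd
      have hxx : |z.re - x₀| < δ := by
        calc |z.re - x₀| = |(z - z₀).re| := by rw [Complex.sub_re]
          _ ≤ ‖z - z₀‖ := Complex.abs_re_le_norm _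
          _ < δ := by rwa [← Complex.dist_eq]
      have hint1 : IntegrableOn (F z) (S ∩ N) volume :=
        (hIntS z hz).mono_set Set.inter_subset_left
      have hbint : IntegrableOn
          (fun t => (Real.log K + |Real.log (t - z.re)| + |Real.log t| + r) * M)
          (S ∩ N) volume := (hSbound_int z.re).mono_set Set.inter_subset_left
      have step1 : |∫ t in S ∩ N, F z t| ≤ ∫ t in S ∩ N, |F z t| := by
        have := norm_integral_le_integral_norm (μ := volume.restrict (S ∩ N)) (F z)
        simpa only [Real.norm_eq_abs] using this
      have step2 : ∫ t in S ∩ N, |F z t| ≤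
          ∫ t in S ∩ N, (Real.log K + |Real.log (t - z.re)| + |Real.log t| + r) * M := by
        apply integral_mono_ae hint1.abs hbint
        filter_upwards [ae_restrict_mem (hSm.inter hNm),
          ae_restrict_of_ae (ae_ne_pair 0 z.re)] with t ht hp
        exact hFS z hz t ht.1 hp.1 hp.2
      have hbig1 : IntegrableOn (fun t => (Real.log K + |Real.log (t - z.re)|) * M) S volume :=
        Integrable.mul_const ((hconst (Real.log K)).add (absLog_shift_integrableOn z.re hTT)) M
      have hbint1 : IntegrableOn (fun t => (Real.log K + |Real.log (t - z.re)|) * M)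
          (S ∩ N) volume := hbig1.mono_set Set.inter_subset_left
      have hbig2 : IntegrableOn (fun t => (|Real.log t| + r) * M) S volume :=
        Integrable.mul_const (hlogt_int.add (hconst r)) M
      have hbint2 : IntegrableOn (fun t => (|Real.log t| + r) * M) (S ∩ N) volume :=
        hbig2.mono_set Set.inter_subset_left
      have step3 : ∫ t in S ∩ N, (Real.log K + |Real.log (t - z.re)| + |Real.log t| + r) * M
          = (∫ t in S ∩ N, (Real.log K + |Real.log (t - z.re)|) * M) +
            (∫ t in S ∩ N, (|Real.log t| + r) * M) := by
        rw [← integral_add hbint1 hbint2]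
        apply MeasureTheory.integral_congr_ae
        apply Filter.Eventually.of_forall
        intro t
        ring
      -- first piece: translate
      have hsubset1 : S ∩ N ⊆ Icc (z.re - 3*δ) (z.re + 3*δ) := by
        intro t ht
        have htN := ht.2
        rw [hNdef, Set.mem_Icc] at htN
        rw [Set.mem_Icc]
        have h1 := abs_lt.mp hxx
        constructor <;> linarith [htN.1, htN.2, h1.1, h1.2]
      have hp1nonneg : ∀ t : ℝ, 0 ≤ (Real.log K + |Real.log (t - z.re)|) * M := by
        intro t
        apply mul_nonneg _ hM_0
        have := abs_nonneg (Real.log (t - z.re))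
        linarith
      have hp1bigint : IntegrableOn (fun t => (Real.log K + |Real.log (t - z.re)|) * M)
          (Icc (z.re - 3*δ) (z.re + 3*δ)) volume := by
        apply Integrable.mul_const
        refine Integrable.add ?_ ?_
        · exact integrableOn_const measure_Icc_lt_top.ne
        · exact absLog_shift_integrableOn z.re (by linarith)
      have step4 : ∫ t in S ∩ N, (Real.log K + |Real.log (t - z.re)|) * M ≤
          ∫ t in Icc (z.re - 3*δ) (z.re + 3*δ), (Real.log K + |Real.log (t - z.re)|) * M := by
        apply setIntegral_mono_set hp1bigint
          (Filter.Eventually.of_forall fun t => hp1nonneg t)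
          (HasSubset.Subset.eventuallyLE hsubset1)
      have step5 : ∫ t in Icc (z.re - 3*δ) (z.re + 3*δ),
            (Real.log K + |Real.log (t - z.re)|) * M
          = ∫ t in Icc (-(3*δ)) (3*δ), (Real.log K + |Real.log t|) * M := by
        have h := setIntegral_Icc_shift (fun s => (Real.log K + |Real.log s|) * M) z.re
          (show -(3*δ) ≤ 3*δ by linarith)
        rw [show -(3*δ) + z.re = z.re - 3*δ by ring, show 3*δ + z.re = z.re + 3*δ by ring] at h
        exact h
      -- second piece
      have hp2nonneg : ∀ t : ℝ, 0 ≤ (|Real.log t| + r) * M := by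
        intro t
        apply mul_nonneg _ hM_0
        have := abs_nonneg (Real.log t)
        linarith
      have hp2bigint : IntegrableOn (fun t => (|Real.log t| + r) * M) N volume := by
        apply Integrable.mul_const
        refine Integrable.add ?_ ?_
        · simpa [IntegrableOn] using absLog_shift_integrableOn 0 (show x₀ - 2*δ ≤ x₀ + 2*δ by linarith)
        · exact integrableOn_const measure_Icc_lt_top.ne
      have step6 : ∫ t in S ∩ N, (|Real.log t| + r) * M ≤ ∫ t in N, (|Real.log t| + r) * M := by
        apply setIntegral_mono_set hp2bigint
          (Filter.Eventually.of_forall fun t => hp2nonneg t)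
          (HasSubset.Subset.eventuallyLE Set.inter_subset_right)
      -- pull out M
      have hmicc1 : ∫ t in Icc (-(3*δ)) (3*δ), (Real.log K + |Real.log t|) * M
          = (∫ t in Icc (-(3*δ)) (3*δ), (Real.log K + |Real.log t|)) * M :=
        integral_mul_const M _
      have hmicc2 : ∫ t in N, (|Real.log t| + r) * M
          = (∫ t in Icc (x₀-2*δ) (x₀+2*δ), (|Real.log t| + r)) * M :=
        integral_mul_const M _
      have hsum : (∫ t in Icc (-(3*δ)) (3*δ), (Real.log K + |Real.log t|)) * M +
            (∫ t in Icc (x₀-2*δ) (x₀+2*δ), (|Real.log t| + r)) * M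
          = M * ((∫ t in Icc (-(3*δ)) (3*δ), (Real.log K + |Real.log t|)) +
            (∫ t in Icc (x₀-2*δ) (x₀+2*δ), (|Real.log t| + r))) := by ring
      have hchain : |∫ t in S ∩ N, F z t| ≤
          M * ((∫ t in Icc (-(3*δ)) (3*δ), (Real.log K + |Real.log t|)) +
            (∫ t in Icc (x₀-2*δ) (x₀+2*δ), (|Real.log t| + r))) := by
        have h1 := le_trans step1 (le_trans step2 (le_of_eq step3))
        have h2 := add_le_add (le_trans step4 (le_of_eq step5)) step6
        rw [hmicc1, hmicc2, hsum] at h2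
        linarith
      have hqle := le_abs_self (M * ((∫ t in Icc (-(3*δ)) (3*δ), (Real.log K + |Real.log t|)) +
            (∫ t in Icc (x₀-2*δ) (x₀+2*δ), (|Real.log t| + r))))
      linarith
    -- continuity of the far part
    have hfar : ContinuousAt (fun z => ∫ t in S \ N, F z t) z₀ := by
      have heq : (fun z => ∫ t in S \ N, F z t)
          = fun z => ∫ t : ℝ, (S \ N).indicator (F z) t := by
        funext z; rw [MeasureTheory.integral_indicator (hSm.diff hNm)]
      rw [heq]
      apply continuousAt_of_dominated
        (bound := (S \ N).indicator
          (fun t => (2 * Real.log K - Real.log δ + |Real.log t| + r) * M))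
      · exact Filter.Eventually.of_forall fun z =>
          ((hFm z).indicator (hSm.diff hNm)).aestronglyMeasurable
      · filter_upwards [Metric.ball_mem_nhds z₀ (lt_min hδ0 one_pos)] with z hzball
        have hzd : dist z z₀ < δ := lt_of_lt_of_le (Metric.mem_ball.mp hzball) (min_le_left _ _)
        have hz1 : dist z z₀ < 1 := lt_of_lt_of_le (Metric.mem_ball.mp hzball) (min_le_right _ _)
        have hzr : ‖z‖ ≤ r := hball z hz1
        have hxx : |z.re - x₀| < δ := by
          calc |z.re - x₀| = |(z - z₀).re| := by rw [Complex.sub_re]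
            _ ≤ ‖z - z₀‖ := Complex.abs_re_le_norm _
            _ < δ := by rwa [← Complex.dist_eq]
        filter_upwards [ae_ne_pair 0 z.re] with t htp
        by_cases ht : t ∈ S \ N
        · rw [Set.indicator_of_mem ht, Set.indicator_of_mem ht, Real.norm_eq_abs]
          have htS := ht.1
          have htN := ht.2
          have htT : |t| ≤ T := abs_le.mpr ⟨htS.1, htS.2⟩
          have htx₀ : 2*δ < |t - x₀| := by
            by_contra hcon
            push_neg at hcon
            apply htN
            rw [hNdef, Set.mem_Icc]
            have := abs_le.mp hcon
            constructor <;> linarith [this.1, this.2]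
          have htx : δ < |t - z.re| := by
            have h3 : |t - x₀| ≤ |t - z.re| + |z.re - x₀| := abs_sub_le t z.re x₀
            linarith
          -- bound |log (t - z.re)|
          have htzK : |t - z.re| ≤ K := by
            have h4 : |z.re| ≤ r := le_trans (Complex.abs_re_le_norm z) hzr
            calc |t - z.re| ≤ |t| + |z.re| := (by simpa only [Real.norm_eq_abs] using norm_sub_le t z.re)
              _ ≤ T + r := add_le_add htT h4
              _ = K := hKdef.symm
          have hlogtz : |Real.log (t - z.re)| ≤ Real.log K - Real.log δ := by
            rw [← Real.log_abs]
            have hlog1 : Real.log δ ≤ Real.log |t - z.re| := Real.log_le_log hδ0 htx.le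
            have hlog2 : Real.log |t - z.re| ≤ Real.log K :=
              Real.log_le_log (lt_trans hδ0 htx) htzK
            have hlogδ : Real.log δ ≤ 0 := Real.log_nonpos hδ0.le hδ1
            rw [abs_le]
            constructor <;> linarith
          have h5 := hFS z hzr t htS htp.1 htp.2
          calc |F z t| ≤ (Real.log K + |Real.log (t - z.re)| + |Real.log t| + r) * M := h5
            _ ≤ (2 * Real.log K - Real.log δ + |Real.log t| + r) * M := by
                apply mul_le_mul_of_nonneg_right _ hM_0
                linarith
        · rw [Set.indicator_of_notMem ht, Set.indicator_of_notMem ht, norm_zero]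
      · rw [integrable_indicator_iff (hSm.diff hNm)]
        have hbigS : IntegrableOn
            (fun t => (2 * Real.log K - Real.log δ + |Real.log t| + r) * M) S volume :=
          Integrable.mul_const (((hconst (2 * Real.log K - Real.log δ)).add hlogt_int).add
            (hconst r)) M
        exact hbigS.mono_set Set.diff_subset
      · filter_upwards [ae_ne_pair 0 x₀] with t htp
        by_cases ht : t ∈ S \ N
        · have htN := ht.2
          have htx₀ : 2*δ < |t - x₀| := by
            by_contra hcon
            push_neg at hcon
            apply htN
            rw [hNdef, Set.mem_Icc]
            have := abs_le.mp hcon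
            constructor <;> linarith [this.1, this.2]
          have ht0 : t ≠ 0 := htp.1
          have htz : (t : ℂ) ≠ z₀ := by
            intro h
            have h2 : t = x₀ := by
              rw [hx₀, ← h, Complex.ofReal_re]
            rw [h2] at htx₀
            simp only [sub_self, abs_zero] at htx₀
            linarith
          have hc2 : ContinuousAt (fun z => F z t) z₀ :=
            (continuousAt_logStar ht0 htz).mul continuousAt_const
          have heq2 : (fun z => (S \ N).indicator (F z) t) = fun z => F z t := by
            funext z; rw [Set.indicator_of_mem ht]
          rw [heq2]; exact hc2
        · have heq2 : (fun z => (S \ N).indicator (F z) t) = fun _ => (0:ℝ) := by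
            funext z; rw [Set.indicator_of_notMem ht]
          rw [heq2]; exact continuousAt_const
    -- combine the pieces
    obtain ⟨δ', hδ'0, hfar'⟩ := Metric.continuousAt_iff.mp hfar (ε/4) (by positivity)
    refine ⟨min δ' (min δ 1), by positivity, ?_⟩
    intro z hzd
    have hd1 : dist z z₀ < δ' := lt_of_lt_of_le hzd (min_le_left _ _)
    have hd2 : dist z z₀ < δ :=
      lt_of_lt_of_le hzd (le_trans (min_le_right _ _) (min_le_left _ _))
    have hd3 : dist z z₀ < 1 :=
      lt_of_lt_of_le hzd (le_trans (min_le_right _ _) (min_le_right _ _))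
    have hzr : ‖z‖ ≤ r := hball z hd3
    have hz₀r : ‖z₀‖ ≤ r := habsz₀.le
    have hfz := hfar' hd1
    rw [Real.dist_eq] at hfz ⊢
    have hdecompz : ∫ t in S, F z t = (∫ t in S ∩ N, F z t) + (∫ t in S \ N, F z t) :=
      (integral_inter_add_diff hNm (hIntS z hzr)).symm
    have hdecompz₀ : ∫ t in S, F z₀ t = (∫ t in S ∩ N, F z₀ t) + (∫ t in S \ N, F z₀ t) :=
      (integral_inter_add_diff hNm (hIntS z₀ hz₀r)).symm
    rw [hdecompz, hdecompz₀]
    have hd4 := hAN z hzr hd2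
    have hd5 := hAN z₀ hz₀r (by rwa [dist_self])
    have habs1 : |(∫ t in S ∩ N, F z t) + (∫ t in S \ N, F z t) -
        ((∫ t in S ∩ N, F z₀ t) + (∫ t in S \ N, F z₀ t))| ≤
        |(∫ t in S \ N, F z t) - (∫ t in S \ N, F z₀ t)| +
        |∫ t in S ∩ N, F z t| + |∫ t in S ∩ N, F z₀ t| := by
      have e1 : (∫ t in S ∩ N, F z t) + (∫ t in S \ N, F z t) -
          ((∫ t in S ∩ N, F z₀ t) + (∫ t in S \ N, F z₀ t)) =
          ((∫ t in S \ N, F z t) - (∫ t in S \ N, F z₀ t)) +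
          (∫ t in S ∩ N, F z t) + (-(∫ t in S ∩ N, F z₀ t)) := by ring
      rw [e1]
      calc |_ + _ + _| ≤ |_ + _| + |-(∫ t in S ∩ N, F z₀ t)| := abs_add_le _ _
        _ ≤ |_| + |_| + |-(∫ t in S ∩ N, F z₀ t)| := by
            apply add_le_add_left (abs_add_le _ _)
        _ = _ := by rw [abs_neg]
    linarith
  have heqf : pot (deriv φ) =ᶠ[nhds z₀]
      fun z => (∫ t in S, F z t) + (∫ t in Sᶜ, F z t) := by
    filter_upwards [Metric.ball_mem_nhds z₀ one_pos] with z hz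
    exact hsplit z (hball z hz)
  exact (hA.add hB).congr heqf.symm
end

section
/- Let γ : ℝ → ℝ be positive and continuous and let φ(x) = ∫₀^x γ(t) dt be bi-Lipschitz for distances larger than N with constants C₁, C₂ > 0. Then (ω_γ(i(y+1)) − ω_γ(iy))/y → 0 as y → ∞. -/
open MeasureTheory intervalIntegral Filter

noncomputable def gfun (y t : ℝ) : ℝ := Real.log (1 + y^2/t^2) / 2

lemma gfun_nonneg (y t : ℝ) : 0 ≤ gfun y t := by
  unfold gfun
  have : (1:ℝ) ≤ 1 + y^2/t^2 := by
    have : (0:ℝ) ≤ y^2/t^2 := by positivity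
    linarith
  have := Real.log_nonneg this
  linarith

lemma logStar_I (y t : ℝ) : logStar (Complex.I * (y:ℂ)) t = gfun y t := by
  have hre : (Complex.I * (y:ℂ)).re = 0 := by simp
  have habs : ‖1 - Complex.I * (y:ℂ) / (t : ℂ)‖ = Real.sqrt (1 + y^2/t^2) := by
    have h1 : (1:ℂ) - Complex.I * (y:ℂ) / (t : ℂ) = ((1:ℝ):ℂ) + ((-(y/t):ℝ):ℂ) * Complex.I := by
      push_cast; ring
    rw [h1, Complex.norm_add_mul_I]
    congr 1
    rw [neg_pow, div_pow]; ring
  have hlog : Real.log (‖1 - Complex.I * (y:ℂ) / (t : ℂ)‖) = gfun y t := by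
    rw [habs, Real.log_sqrt (by positivity)]; rfl
  unfold logStar
  split_ifs with h
  · rw [hre, hlog]; ring
  · exact hlog

lemma aux_block (γ : ℝ → ℝ) (hγcont : Continuous γ) (hγ0 : ∀ t, 0 ≤ γ t)
    (φ : ℝ → ℝ) (hφ : ∀ x, φ x = ∫ t in (0:ℝ)..x, γ t)
    (N C₂ : ℝ)
    (hbl : ∀ x₁ x₂ : ℝ, N ≤ x₂ - x₁ → φ x₂ - φ x₁ ≤ C₂ * (x₂ - x₁)) (a : ℝ) :
    ∫⁻ t in Set.Ioc a (a+1), ENNReal.ofReal (γ t) ≤ ENNReal.ofReal (C₂ * max 1 N) := by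
  set L := max 1 N with hL
  have hL1 : (1:ℝ) ≤ L := le_max_left _ _
  have hLN : N ≤ L := le_max_right _ _
  have hsub : Set.Ioc a (a+1) ⊆ Set.Ioc a (a+L) := Set.Ioc_subset_Ioc le_rfl (by linarith)
  refine le_trans (lintegral_mono_set hsub) ?_
  have hii : IntervalIntegrable γ volume a (a+L) := hγcont.intervalIntegrable a (a+L)
  have hint : IntegrableOn γ (Set.Ioc a (a+L)) :=
    (intervalIntegrable_iff_integrableOn_Ioc_of_le (by linarith)).1 hii
  rw [← ofReal_integral_eq_lintegral_ofReal hint (ae_of_all _ (fun t => hγ0 t))]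
  apply ENNReal.ofReal_le_ofReal
  have h1 : ∫ t in Set.Ioc a (a+L), γ t = ∫ t in a..(a+L), γ t :=
    (intervalIntegral.integral_of_le (by linarith)).symm
  have h2 : ∫ t in a..(a+L), γ t = φ (a+L) - φ a := by
    rw [hφ, hφ]
    have := intervalIntegral.integral_add_adjacent_intervals
      (hγcont.intervalIntegrable 0 a) hii
    linarith
  rw [h1, h2]
  have := hbl a (a+L) (by linarith)
  linarith

lemma core_full (γ : ℝ → ℝ) (hγm : Measurable γ) (hγ0 : ∀ t, 0 ≤ γ t) (M : ℝ)
    (hM : ∀ a : ℝ, ∫⁻ t in Set.Ioc a (a+1), ENNReal.ofReal (γ t) ≤ ENNReal.ofReal M)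
    (ψ : ℝ → ℝ) (c : ℕ → ℝ) (hψ0 : ∀ t, 0 ≤ ψ t)
    (hψc : ∀ (k : ℕ) (t : ℝ), (k:ℝ) ≤ |t| → |t| ≤ (k:ℝ)+1 → ψ t ≤ c k) :
    ∫⁻ t, ENNReal.ofReal (ψ t * γ t) ≤
      2 * ENNReal.ofReal M * ∑' k : ℕ, ENNReal.ofReal (c k) := by
  have hblock : ∀ (k : ℕ) (a : ℝ), (∀ t ∈ Set.Ioc a (a+1), (k:ℝ) ≤ |t| ∧ |t| ≤ (k:ℝ)+1) →
      ∫⁻ t in Set.Ioc a (a+1), ENNReal.ofReal (ψ t * γ t)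
        ≤ ENNReal.ofReal (c k) * ENNReal.ofReal M := by
    intro k a ha
    have hmono : ∀ t ∈ Set.Ioc a (a+1),
        ENNReal.ofReal (ψ t * γ t) ≤ ENNReal.ofReal (c k) * ENNReal.ofReal (γ t) := by
      intro t ht
      have hb := hψc k t (ha t ht).1 (ha t ht).2
      rw [← ENNReal.ofReal_mul (le_trans (hψ0 t) hb)]
      exact ENNReal.ofReal_le_ofReal (mul_le_mul_of_nonneg_right hb (hγ0 t))
    calc ∫⁻ t in Set.Ioc a (a+1), ENNReal.ofReal (ψ t * γ t)
        ≤ ∫⁻ t in Set.Ioc a (a+1), ENNReal.ofReal (c k) * ENNReal.ofReal (γ t) :=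
          setLIntegral_mono (by exact measurable_const.mul (hγm.ennreal_ofReal)) hmono
      _ = ENNReal.ofReal (c k) * ∫⁻ t in Set.Ioc a (a+1), ENNReal.ofReal (γ t) :=
          lintegral_const_mul' _ _ ENNReal.ofReal_ne_top
      _ ≤ ENNReal.ofReal (c k) * ENNReal.ofReal M := mul_le_mul_right (hM a) _
  have hposincl : Set.Ioi (0:ℝ) ⊆ ⋃ k : ℕ, Set.Ioc (k:ℝ) ((k:ℝ)+1) := by
    intro t ht
    simp only [Set.mem_Ioi] at ht
    refine Set.mem_iUnion.2 ⟨⌈t⌉₊ - 1, ?_⟩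
    have h1 : 1 ≤ ⌈t⌉₊ := Nat.one_le_iff_ne_zero.2 (by positivity)
    have hc1 : ((⌈t⌉₊ - 1 : ℕ) : ℝ) = (⌈t⌉₊ : ℝ) - 1 := by
      rw [Nat.cast_sub h1]; norm_num
    constructor
    · rw [hc1]
      have := Nat.ceil_lt_add_one ht.le
      linarith
    · rw [hc1]
      have := Nat.le_ceil t
      linarith
  have hnegincl : Set.Iic (0:ℝ) ⊆ ⋃ k : ℕ, Set.Ioc (-(k:ℝ)-1) (-(k:ℝ)-1+1) := by
    intro t ht
    simp only [Set.mem_Iic] at ht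
    refine Set.mem_iUnion.2 ⟨⌊-t⌋₊, ?_⟩
    have h1 : (⌊-t⌋₊ : ℝ) ≤ -t := Nat.floor_le (by linarith)
    have h2 : -t < ⌊-t⌋₊ + 1 := Nat.lt_floor_add_one _
    constructor <;> [linarith; linarith]
  have hpos : ∫⁻ t in Set.Ioi (0:ℝ), ENNReal.ofReal (ψ t * γ t)
      ≤ ENNReal.ofReal M * ∑' k : ℕ, ENNReal.ofReal (c k) := by
    refine le_trans (lintegral_mono_set hposincl) ?_
    refine le_trans (lintegral_iUnion_le _ _) ?_
    rw [← ENNReal.tsum_mul_left]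
    refine ENNReal.tsum_le_tsum (fun k => ?_)
    rw [mul_comm]
    refine hblock k (k:ℝ) (fun t ht => ?_)
    have h0 : (0:ℝ) ≤ (k:ℝ) := Nat.cast_nonneg k
    have habs : |t| = t := abs_of_pos (lt_of_le_of_lt h0 ht.1)
    exact ⟨by rw [habs]; exact ht.1.le, by rw [habs]; exact ht.2⟩
  have hneg : ∫⁻ t in Set.Iic (0:ℝ), ENNReal.ofReal (ψ t * γ t)
      ≤ ENNReal.ofReal M * ∑' k : ℕ, ENNReal.ofReal (c k) := by
    refine le_trans (lintegral_mono_set hnegincl) ?_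
    refine le_trans (lintegral_iUnion_le _ _) ?_
    rw [← ENNReal.tsum_mul_left]
    refine ENNReal.tsum_le_tsum (fun k => ?_)
    rw [mul_comm]
    refine hblock k (-(k:ℝ)-1) (fun t ht => ?_)
    have h2 : t ≤ -(k:ℝ) := by have := ht.2; linarith
    have h0 : t ≤ 0 := le_trans h2 (by simp [Nat.cast_nonneg])
    have habs : |t| = -t := abs_of_nonpos h0
    exact ⟨by rw [habs]; linarith, by rw [habs]; have := ht.1; linarith⟩
  calc ∫⁻ t, ENNReal.ofReal (ψ t * γ t)
      = (∫⁻ t in Set.Ioi (0:ℝ), ENNReal.ofReal (ψ t * γ t))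
        + ∫⁻ t in Set.Iic (0:ℝ), ENNReal.ofReal (ψ t * γ t) := by
        have := lintegral_add_compl (μ := volume) (fun t => ENNReal.ofReal (ψ t * γ t))
          (measurableSet_Ioi (a := (0:ℝ)))
        rw [Set.compl_Ioi] at this
        exact this.symm
    _ ≤ ENNReal.ofReal M * ∑' k : ℕ, ENNReal.ofReal (c k)
        + ENNReal.ofReal M * ∑' k : ℕ, ENNReal.ofReal (c k) := add_le_add hpos hneg
    _ = 2 * ENNReal.ofReal M * ∑' k : ℕ, ENNReal.ofReal (c k) := by ring

lemma core_real (γ : ℝ → ℝ) (hγm : Measurable γ) (hγ0 : ∀ t, 0 ≤ γ t) (M : ℝ) (hM0 : 0 ≤ M)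
    (hM : ∀ a : ℝ, ∫⁻ t in Set.Ioc a (a+1), ENNReal.ofReal (γ t) ≤ ENNReal.ofReal M)
    (ψ : ℝ → ℝ) (c : ℕ → ℝ) (hψm : Measurable ψ) (hψ0 : ∀ t, 0 ≤ ψ t) (hc0 : ∀ k, 0 ≤ c k)
    (hc : Summable c)
    (hψc : ∀ (k : ℕ) (t : ℝ), (k:ℝ) ≤ |t| → (|t|:ℝ) ≤ (k:ℝ)+1 → ψ t ≤ c k) :
    Integrable (fun t => ψ t * γ t) ∧
      ∫ t, ψ t * γ t ≤ 2 * M * ∑' k : ℕ, c k := by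
  have hnn : ∀ t, 0 ≤ ψ t * γ t := fun t => mul_nonneg (hψ0 t) (hγ0 t)
  have hmeas : Measurable (fun t => ψ t * γ t) := hψm.mul hγm
  have hlin := core_full γ hγm hγ0 M hM ψ c hψ0 hψc
  have htsum : (∑' k : ℕ, ENNReal.ofReal (c k)) = ENNReal.ofReal (∑' k : ℕ, c k) :=
    (ENNReal.ofReal_tsum_of_nonneg hc0 hc).symm
  have hbound : ∫⁻ t, ENNReal.ofReal (ψ t * γ t) ≤ ENNReal.ofReal (2 * M * ∑' k : ℕ, c k) := by
    refine le_trans hlin ?_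
    rw [htsum, ENNReal.ofReal_mul (by positivity : (0:ℝ) ≤ 2 * M),
      ENNReal.ofReal_mul (by norm_num : (0:ℝ) ≤ 2), ENNReal.ofReal_ofNat]
  have hint : Integrable (fun t => ψ t * γ t) := by
    refine ⟨hmeas.aestronglyMeasurable, ?_⟩
    rw [hasFiniteIntegral_iff_ofReal (ae_of_all _ hnn)]
    exact lt_of_le_of_lt hbound ENNReal.ofReal_lt_top
  refine ⟨hint, ?_⟩
  rw [integral_eq_lintegral_of_nonneg_ae (ae_of_all _ hnn) hmeas.aestronglyMeasurable]
  refine ENNReal.toReal_le_of_le_ofReal ?_ hbound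
  have : 0 ≤ ∑' k, c k := tsum_nonneg hc0
  positivity

lemma key_ineq (y : ℝ) (hy : 1 ≤ y) (x : ℝ) (hx : 1 ≤ x) :
    (x^2 + y^2)⁻¹ ≤ (x^((3:ℝ)/2))⁻¹ * (Real.sqrt y)⁻¹ := by
  have hx0 : (0:ℝ) < x := by linarith
  have hy0 : (0:ℝ) < y := by linarith
  have hsq : Real.sqrt y = y^((1:ℝ)/2) := Real.sqrt_eq_rpow y
  have hprod : x^((3:ℝ)/2) * Real.sqrt y ≤ x^2 + y^2 := by
    rw [hsq]
    rcases le_total x y with h|h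
    · have h1 : x^((3:ℝ)/2) ≤ y^((3:ℝ)/2) := Real.rpow_le_rpow hx0.le h (by norm_num)
      have h2 : x^((3:ℝ)/2) * y^((1:ℝ)/2) ≤ y^((3:ℝ)/2) * y^((1:ℝ)/2) :=
        mul_le_mul_of_nonneg_right h1 (Real.rpow_nonneg hy0.le _)
      have h3 : y^((3:ℝ)/2) * y^((1:ℝ)/2) = y^2 := by
        rw [← Real.rpow_add hy0, ← Real.rpow_natCast y 2]
        norm_num
      nlinarith [sq_nonneg x]
    · have h1 : y^((1:ℝ)/2) ≤ x^((1:ℝ)/2) := Real.rpow_le_rpow hy0.le h (by norm_num)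
      have h2 : x^((3:ℝ)/2) * y^((1:ℝ)/2) ≤ x^((3:ℝ)/2) * x^((1:ℝ)/2) :=
        mul_le_mul_of_nonneg_left h1 (Real.rpow_nonneg hx0.le _)
      have h3 : x^((3:ℝ)/2) * x^((1:ℝ)/2) = x^2 := by
        rw [← Real.rpow_add hx0, ← Real.rpow_natCast x 2]
        norm_num
      nlinarith [sq_nonneg y]
  have hp : (0:ℝ) < x^((3:ℝ)/2) * Real.sqrt y := by
    apply mul_pos (Real.rpow_pos_of_pos hx0 _) (Real.sqrt_pos.2 hy0)
  rw [← mul_inv]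
  exact inv_anti₀ hp hprod

lemma summable_d : Summable (fun k : ℕ => (((k:ℝ)+1)^((3:ℝ)/2))⁻¹) := by
  have h1 : Summable (fun n : ℕ => (((n:ℝ))^((3:ℝ)/2))⁻¹) :=
    Real.summable_nat_rpow_inv.2 (by norm_num)
  have h2 := (summable_nat_add_iff 1).2 h1
  refine h2.congr (fun k => ?_)
  push_cast
  ring_nf

lemma psi_lemma (γ : ℝ → ℝ) (hγm : Measurable γ) (hγ0 : ∀ t, 0 ≤ γ t) (M : ℝ) (hM0 : 0 ≤ M)
    (hM : ∀ a : ℝ, ∫⁻ t in Set.Ioc a (a+1), ENNReal.ofReal (γ t) ≤ ENNReal.ofReal M)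
    (y : ℝ) (hy : 1 ≤ y) :
    Integrable (fun t => (t^2+y^2)⁻¹ * γ t) ∧
      ∫ t, (t^2+y^2)⁻¹ * γ t ≤
        2*M*((y^2)⁻¹ + (∑' k : ℕ, (((k:ℝ)+1)^((3:ℝ)/2))⁻¹) * (Real.sqrt y)⁻¹) := by
  have hy0 : (0:ℝ) < y := by linarith
  set c : ℕ → ℝ := fun k => (((k:ℝ))^2 + y^2)⁻¹ with hcdef
  have hψm : Measurable (fun t : ℝ => (t^2+y^2)⁻¹) :=
    ((measurable_id.pow_const 2).add_const (y^2)).inv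
  have hψ0 : ∀ t : ℝ, 0 ≤ (t^2+y^2)⁻¹ := fun t => by positivity
  have hc0 : ∀ k, 0 ≤ c k := fun k => by positivity
  have hckey : ∀ k : ℕ, c (k+1) ≤ (((k:ℝ)+1)^((3:ℝ)/2))⁻¹ * (Real.sqrt y)⁻¹ := by
    intro k
    have := key_ineq y hy ((k:ℝ)+1) (by have : (0:ℝ) ≤ (k:ℝ) := Nat.cast_nonneg k; linarith)
    simpa [hcdef] using this
  have hc : Summable c := by
    rw [← summable_nat_add_iff 1]
    refine Summable.of_nonneg_of_le (fun k => hc0 _) (fun k => hckey k) ?_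
    exact summable_d.mul_right _
  have hψc : ∀ (k : ℕ) (t : ℝ), (k:ℝ) ≤ |t| → |t| ≤ (k:ℝ)+1 → (t^2+y^2)⁻¹ ≤ c k := by
    intro k t h1 _
    have ht2 : ((k:ℝ))^2 ≤ t^2 := by
      rw [← sq_abs t]
      exact pow_le_pow_left₀ (Nat.cast_nonneg k) h1 2
    apply inv_anti₀ (by positivity)
    linarith
  obtain ⟨hint, hle⟩ := core_real γ hγm hγ0 M hM0 hM _ c hψm hψ0 hc0 hc hψc
  refine ⟨hint, le_trans hle ?_⟩
  have htsum : ∑' k, c k ≤ (y^2)⁻¹ + (∑' k : ℕ, (((k:ℝ)+1)^((3:ℝ)/2))⁻¹) * (Real.sqrt y)⁻¹ := by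
    rw [Summable.tsum_eq_zero_add hc]
    have h0 : c 0 = (y^2)⁻¹ := by simp [hcdef]
    rw [h0]
    have h1 : ∑' k, c (k+1) ≤ ∑' k : ℕ, (((k:ℝ)+1)^((3:ℝ)/2))⁻¹ * (Real.sqrt y)⁻¹ :=
      Summable.tsum_le_tsum hckey ((summable_nat_add_iff 1).2 hc) (summable_d.mul_right _)
    rw [tsum_mul_right] at h1
    linarith
  exact mul_le_mul_of_nonneg_left htsum (by positivity)

lemma sqrt_integrable : IntegrableOn (fun t : ℝ => |t| ^ (-(1/2):ℝ)) (Set.Ioc (-1:ℝ) 1) := by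
  have hpos : IntegrableOn (fun t : ℝ => |t| ^ (-(1/2):ℝ)) (Set.Ioc (0:ℝ) 1) := by
    have h1 : IntervalIntegrable (fun x : ℝ => x ^ (-(1/2):ℝ)) volume 0 1 :=
      intervalIntegrable_rpow' (by norm_num)
    have h2 := (intervalIntegrable_iff_integrableOn_Ioc_of_le (by norm_num : (0:ℝ) ≤ 1)).1 h1
    refine h2.congr_fun (fun t ht => ?_) measurableSet_Ioc
    rw [abs_of_pos ht.1]
  have hneg : IntegrableOn (fun t : ℝ => |t| ^ (-(1/2):ℝ)) (Set.Ioc (-1:ℝ) 0) := by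
    have h1 : IntervalIntegrable (fun x : ℝ => x ^ (-(1/2):ℝ)) volume 0 1 :=
      intervalIntegrable_rpow' (by norm_num)
    have h2 : IntervalIntegrable (fun x : ℝ => (-x) ^ (-(1/2):ℝ)) volume (-0) (-1) :=
      (IntervalIntegrable.iff_comp_neg (f := fun x : ℝ => x ^ (-(1/2):ℝ))).1 h1
    rw [neg_zero] at h2
    have h3 := (intervalIntegrable_iff_integrableOn_Ioc_of_le (by norm_num : (-1:ℝ) ≤ 0)).1 h2.symm
    refine h3.congr_fun (fun t ht => ?_) measurableSet_Ioc
    rw [abs_of_nonpos ht.2]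
  have := hneg.union hpos
  rwa [Set.Ioc_union_Ioc_eq_Ioc (by norm_num : (-1:ℝ) ≤ 0) (by norm_num : (0:ℝ) ≤ 1)] at this

lemma gfun_measurable (y : ℝ) : Measurable (gfun y) := by
  unfold gfun
  exact (Real.measurable_log.comp
    (measurable_const.add ((measurable_const.div ((measurable_id.pow_const 2)))))).div_const 2

lemma g_integrable (γ : ℝ → ℝ) (hγcont : Continuous γ) (hγ0 : ∀ t, 0 ≤ γ t) (M : ℝ) (hM0 : 0 ≤ M)
    (hM : ∀ a : ℝ, ∫⁻ t in Set.Ioc a (a+1), ENNReal.ofReal (γ t) ≤ ENNReal.ofReal M)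
    (y : ℝ) : Integrable (fun t => gfun y t * γ t) := by
  have hγm := hγcont.measurable
  have hgm := gfun_measurable y
  have hmeas : AEStronglyMeasurable (fun t => gfun y t * γ t) volume :=
    (hgm.mul hγm).aestronglyMeasurable
  obtain ⟨B, hB⟩ := isCompact_Icc.exists_bound_of_continuousOn
    (s := Set.Icc (-1:ℝ) 1) hγcont.continuousOn
  have hB0 : 0 ≤ B := le_trans (norm_nonneg _) (hB 0 (by norm_num))
  have hγB : ∀ t ∈ Set.Ioc (-1:ℝ) 1, γ t ≤ B := fun t ht =>
    le_trans (le_abs_self _) (hB t ⟨ht.1.le, ht.2⟩)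
  have hmid : IntegrableOn (fun t => gfun y t * γ t) (Set.Ioc (-1:ℝ) 1) := by
    have hu : IntegrableOn
        (fun t : ℝ => (Real.log (1+y^2)/2 + 2 * |t| ^ (-(1/2):ℝ)) * B) (Set.Ioc (-1:ℝ) 1) := by
      refine Integrable.mul_const ?_ B
      exact (integrableOn_const measure_Ioc_lt_top.ne).add (Integrable.const_mul sqrt_integrable 2)
    refine hu.mono' hmeas.restrict ?_
    refine (ae_restrict_iff' measurableSet_Ioc).2 (ae_of_all _ (fun t ht => ?_))
    have hg0 := gfun_nonneg y t
    have hrpow0 : (0:ℝ) ≤ |t| ^ (-(1/2):ℝ) := Real.rpow_nonneg (abs_nonneg t) _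
    have hlog0 : (0:ℝ) ≤ Real.log (1+y^2) := Real.log_nonneg (by nlinarith [sq_nonneg y])
    have hgb : gfun y t ≤ Real.log (1+y^2)/2 + 2 * |t| ^ (-(1/2):ℝ) := by
      rcases eq_or_ne t 0 with rfl|ht0
      · have h0 : gfun y 0 = 0 := by unfold gfun; norm_num
        rw [h0]
        positivity
      · have habs : (0:ℝ) < |t| := abs_pos.2 ht0
        have habs1 : |t| ≤ 1 := abs_le.2 ⟨ht.1.le, ht.2⟩
        have ht2 : (0:ℝ) < t^2 := by positivity
        have h1 : 1 + y^2/t^2 ≤ (1+y^2)/t^2 := by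
          have h1t : t^2 ≤ 1 := by rw [← sq_abs]; nlinarith
          have he : (1+y^2)/t^2 - (1 + y^2/t^2) = (1-t^2)/t^2 := by
            field_simp
            ring
          have hnn : (0:ℝ) ≤ (1-t^2)/t^2 := div_nonneg (by linarith) ht2.le
          linarith
        have h2 : Real.log (1 + y^2/t^2) ≤ Real.log ((1+y^2)/t^2) :=
          Real.log_le_log (by positivity) h1
        have h3 : Real.log ((1+y^2)/t^2) = Real.log (1+y^2) - 2 * Real.log |t| := by
          rw [Real.log_div (by positivity) (ne_of_gt ht2), ← Real.log_abs (t^2),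
            abs_pow, Real.log_pow]
          norm_num
        have h4 : -Real.log |t| ≤ 2 * |t| ^ (-(1/2):ℝ) := by
          have hinv : (0:ℝ) < |t|⁻¹ := by positivity
          have l1 : Real.log |t|⁻¹ = 2 * Real.log (Real.sqrt |t|⁻¹) := by
            rw [Real.log_sqrt hinv.le]; ring
          have l2 : Real.log (Real.sqrt |t|⁻¹) ≤ Real.sqrt |t|⁻¹ - 1 :=
            Real.log_le_sub_one_of_pos (Real.sqrt_pos.2 hinv)
          have l3 : Real.sqrt |t|⁻¹ = |t| ^ (-(1/2):ℝ) := by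
            rw [Real.sqrt_inv, Real.sqrt_eq_rpow, ← Real.rpow_neg (abs_nonneg t)]
          have l4 : -Real.log |t| = Real.log |t|⁻¹ := (Real.log_inv _).symm
          have l5 : (0:ℝ) ≤ Real.sqrt |t|⁻¹ := Real.sqrt_nonneg _
          rw [l4, l1, ← l3]
          linarith
        unfold gfun
        linarith
    rw [Real.norm_of_nonneg (mul_nonneg hg0 (hγ0 t))]
    exact mul_le_mul hgb (hγB t ht) (hγ0 t) (by positivity)
  have hψint : Integrable (fun t => (t^2+1)⁻¹ * γ t) := by
    have := (psi_lemma γ hγm hγ0 M hM0 hM 1 le_rfl).1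
    simpa using this
  have htail : IntegrableOn (fun t => gfun y t * γ t) ((Set.Ioc (-1:ℝ) 1)ᶜ) := by
    refine ((hψint.const_mul (y^2)).integrableOn).mono' hmeas.restrict ?_
    refine (ae_restrict_iff' measurableSet_Ioc.compl).2 (ae_of_all _ (fun t ht => ?_))
    have h1t : 1 ≤ |t| := by
      simp only [Set.mem_compl_iff, Set.mem_Ioc, not_and, not_le] at ht
      rcases le_or_gt t (-1) with h|h
      · rw [abs_of_nonpos (by linarith)]; linarith
      · have := ht h; rw [abs_of_pos (by linarith)]; linarith
    have ht2 : (1:ℝ) ≤ t^2 := by rw [← sq_abs]; nlinarith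
    have ht2p : (0:ℝ) < t^2 := by linarith
    have hgb : gfun y t ≤ y^2 * (t^2+1)⁻¹ := by
      have h2 : Real.log (1+y^2/t^2) ≤ y^2/t^2 := by
        have := Real.log_le_sub_one_of_pos (x := 1 + y^2/t^2) (by positivity)
        linarith
      have h3 : y^2/t^2/2 ≤ y^2 * (t^2+1)⁻¹ := by
        rw [div_div, ← div_eq_mul_inv]
        gcongr
        linarith
      unfold gfun
      linarith
    rw [Real.norm_of_nonneg (mul_nonneg (gfun_nonneg y t) (hγ0 t))]
    calc gfun y t * γ t ≤ (y^2 * (t^2+1)⁻¹) * γ t := mul_le_mul_of_nonneg_right hgb (hγ0 t)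
      _ = y^2 * ((t^2+1)⁻¹ * γ t) := by ring
  have hun := hmid.union htail
  rw [Set.union_compl_self] at hun
  exact integrableOn_univ.1 hun

theorem stmt_8 (γ : ℝ → ℝ) (hγpos : ∀ t, 0 < γ t) (hγcont : Continuous γ)
    (φ : ℝ → ℝ) (hφ : ∀ x, φ x = ∫ t in (0:ℝ)..x, γ t)
    (N C₁ C₂ : ℝ) (hN : 0 < N) (hC₁ : 0 < C₁) (hC₂ : 0 < C₂)
    (hbl : ∀ x₁ x₂ : ℝ, N ≤ x₂ - x₁ →
      C₁ * (x₂ - x₁) ≤ φ x₂ - φ x₁ ∧ φ x₂ - φ x₁ ≤ C₂ * (x₂ - x₁)) :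
    Tendsto (fun y : ℝ =>
        (pot γ (Complex.I * ((y : ℂ) + 1)) - pot γ (Complex.I * (y : ℂ))) / y)
      atTop (nhds 0) := by
  have hγm := hγcont.measurable
  have hγ0 : ∀ t, 0 ≤ γ t := fun t => (hγpos t).le
  set M := C₂ * max 1 N with hMdef
  have hmax1 : (1:ℝ) ≤ max 1 N := le_max_left _ _
  have hM0 : 0 ≤ M := mul_nonneg hC₂.le (by linarith)
  have hM : ∀ a, ∫⁻ t in Set.Ioc a (a+1), ENNReal.ofReal (γ t) ≤ ENNReal.ofReal M :=
    aux_block γ hγcont hγ0 φ hφ N C₂ (fun x₁ x₂ h => (hbl x₁ x₂ h).2)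
  set S := ∑' k : ℕ, (((k:ℝ)+1)^((3:ℝ)/2))⁻¹ with hSdef
  have hS0 : 0 ≤ S := tsum_nonneg (fun k => by positivity)
  have hpot : ∀ z : ℝ, pot γ (Complex.I * (z:ℂ)) = ∫ t, gfun z t * γ t := by
    intro z; unfold pot; congr 1; funext t; rw [logStar_I]
  have hpot1 : ∀ y : ℝ, pot γ (Complex.I * ((y:ℂ)+1)) = ∫ t, gfun (y+1) t * γ t := by
    intro y
    have hc : ((y:ℂ)+1) = ((y+1:ℝ):ℂ) := by push_cast; ring
    rw [hc, hpot]
  have key : ∀ y : ℝ, 1 ≤ y →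
      0 ≤ (pot γ (Complex.I * ((y:ℂ)+1)) - pot γ (Complex.I * (y:ℂ))) / y ∧
      (pot γ (Complex.I * ((y:ℂ)+1)) - pot γ (Complex.I * (y:ℂ))) / y ≤
        (2*y+1)/y * (M * ((y^2)⁻¹ + S * (Real.sqrt y)⁻¹)) := by
    intro y hy
    have hy0 : (0:ℝ) < y := by linarith
    have hint1 := g_integrable γ hγcont hγ0 M hM0 hM (y+1)
    have hint2 := g_integrable γ hγcont hγ0 M hM0 hM y
    obtain ⟨hintψ, hψle⟩ := psi_lemma γ hγm hγ0 M hM0 hM y hy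
    have hgfun0 : ∀ z : ℝ, gfun z 0 = 0 := by
      intro z; unfold gfun; norm_num
    have hptge : ∀ t, 0 ≤ gfun (y+1) t * γ t - gfun y t * γ t := by
      intro t
      have hg : gfun y t ≤ gfun (y+1) t := by
        unfold gfun
        have hdd : y^2/t^2 ≤ (y+1)^2/t^2 := by
          rcases eq_or_ne t 0 with rfl|h
          · norm_num
          · have ht2 : (0:ℝ) < t^2 := by positivity
            gcongr
            nlinarith
        have := Real.log_le_log (by positivity) (by linarith : 1 + y^2/t^2 ≤ 1 + (y+1)^2/t^2)
        linarith
      have := mul_le_mul_of_nonneg_right hg (hγ0 t)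
      linarith
    have hptle : ∀ t, gfun (y+1) t * γ t - gfun y t * γ t
        ≤ (2*y+1)/2 * ((t^2+y^2)⁻¹ * γ t) := by
      intro t
      have hcase : gfun (y+1) t - gfun y t ≤ (2*y+1)/2 * (t^2+y^2)⁻¹ := by
        rcases eq_or_ne t 0 with rfl|h
        · rw [hgfun0, hgfun0]
          have : (0:ℝ) < (2*y+1)/2 * ((0:ℝ)^2+y^2)⁻¹ := by positivity
          linarith
        · have ht2 : (0:ℝ) < t^2 := by positivity
          have hty : (0:ℝ) < t^2 + y^2 := by positivity
          have hA : (0:ℝ) < 1+(y+1)^2/t^2 := by positivity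
          have hB : (0:ℝ) < 1+y^2/t^2 := by positivity
          have hd : gfun (y+1) t - gfun y t
              = Real.log ((1+(y+1)^2/t^2) / (1+y^2/t^2)) / 2 := by
            unfold gfun
            rw [Real.log_div hA.ne' hB.ne']
            ring
          have hq : (0:ℝ) < (1+(y+1)^2/t^2) / (1+y^2/t^2) := by positivity
          have hlog := Real.log_le_sub_one_of_pos hq
          have he : (1+(y+1)^2/t^2) / (1+y^2/t^2) - 1 = (2*y+1) / (t^2+y^2) := by
            field_simp
            ring
          rw [hd]
          rw [he] at hlog
          have : (2*y+1)/(t^2+y^2) = (2*y+1) * (t^2+y^2)⁻¹ := by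
            rw [div_eq_mul_inv]
          linarith [hlog, this ▸ hlog]
      calc gfun (y+1) t * γ t - gfun y t * γ t
          = (gfun (y+1) t - gfun y t) * γ t := by ring
        _ ≤ ((2*y+1)/2 * (t^2+y^2)⁻¹) * γ t := mul_le_mul_of_nonneg_right hcase (hγ0 t)
        _ = (2*y+1)/2 * ((t^2+y^2)⁻¹ * γ t) := by ring
    have hD : pot γ (Complex.I * ((y:ℂ)+1)) - pot γ (Complex.I * (y:ℂ))
        = ∫ t, (gfun (y+1) t * γ t - gfun y t * γ t) := by
      rw [hpot1, hpot, ← integral_sub hint1 hint2]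
    have hintdiff : Integrable (fun t => gfun (y+1) t * γ t - gfun y t * γ t) :=
      hint1.sub hint2
    have hintR : Integrable (fun t => (2*y+1)/2 * ((t^2+y^2)⁻¹ * γ t)) :=
      hintψ.const_mul _
    have hDle : ∫ t, (gfun (y+1) t * γ t - gfun y t * γ t)
        ≤ (2*y+1)/2 * ∫ t, (t^2+y^2)⁻¹ * γ t := by
      refine le_trans (integral_mono hintdiff hintR hptle) ?_
      rw [MeasureTheory.integral_const_mul]
    have hD0 : 0 ≤ ∫ t, (gfun (y+1) t * γ t - gfun y t * γ t) := integral_nonneg hptge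
    constructor
    · rw [hD]; exact div_nonneg hD0 hy0.le
    · rw [hD]
      have hc2 : (0:ℝ) ≤ (2*y+1)/2 := by linarith
      have hchain : ∫ t, (gfun (y+1) t * γ t - gfun y t * γ t)
          ≤ (2*y+1)/2 * (2*M*((y^2)⁻¹ + S * (Real.sqrt y)⁻¹)) :=
        le_trans hDle (mul_le_mul_of_nonneg_left hψle hc2)
      have heq : ((2*y+1)/2 * (2*M*((y^2)⁻¹ + S * (Real.sqrt y)⁻¹)))/y
          = (2*y+1)/y * (M * ((y^2)⁻¹ + S * (Real.sqrt y)⁻¹)) := by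
        field_simp
      rw [← heq]
      gcongr
  have hub : Tendsto (fun y : ℝ => (2*y+1)/y * (M * ((y^2)⁻¹ + S * (Real.sqrt y)⁻¹)))
      atTop (nhds 0) := by
    have hA : Tendsto (fun y : ℝ => (2*y+1)/y) atTop (nhds 2) := by
      have h2 : Tendsto (fun y : ℝ => 2 + y⁻¹) atTop (nhds (2+0)) :=
        tendsto_const_nhds.add tendsto_inv_atTop_zero
      rw [add_zero] at h2
      refine h2.congr' ?_
      filter_upwards [eventually_gt_atTop (0:ℝ)] with y hy
      field_simp
    have hB : Tendsto (fun y : ℝ => M * ((y^2)⁻¹ + S * (Real.sqrt y)⁻¹))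
        atTop (nhds (M * (0 + S * 0))) := by
      refine tendsto_const_nhds.mul (Tendsto.add ?_ (tendsto_const_nhds.mul ?_))
      · exact tendsto_inv_atTop_zero.comp (tendsto_pow_atTop two_ne_zero)
      · have hrt : Tendsto Real.sqrt atTop atTop := by
          have h1 : Tendsto (fun x : ℝ => x ^ ((1:ℝ)/2)) atTop atTop :=
            tendsto_rpow_atTop (by norm_num)
          refine Tendsto.congr' ?_ h1
          filter_upwards [eventually_ge_atTop (0:ℝ)] with x hx
          rw [Real.sqrt_eq_rpow]
        exact tendsto_inv_atTop_zero.comp hrt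
    have := hA.mul hB
    norm_num at this
    exact this
  refine tendsto_of_tendsto_of_tendsto_of_le_of_le' tendsto_const_nhds hub ?_ ?_
  · filter_upwards [eventually_ge_atTop (1:ℝ)] with y hy
    exact (key y hy).1
  · filter_upwards [eventually_ge_atTop (1:ℝ)] with y hy
    exact (key y hy).2
end

section
/- Fix α ∈ [0, 2]. There exists a constant C > 0 such that for every nonzero integer n and every h ∈ [0, 1/2], | θ_n(n + h) − ( α log|n| − log(1 + |n|^α h) ) | ≤ C. -/
open MeasureTheory intervalIntegral Real

lemma my_arctan_sub_le_mul {y x c : ℝ} (hxy : y ≤ x) (hc : ∀ s, y ≤ s → 1/(1+s^2) ≤ c) :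
    Real.arctan x - Real.arctan y ≤ c * (x - y) := by
  have H : MonotoneOn (fun s => c * s - Real.arctan s) (Set.Ici y) := by
    apply monotoneOn_of_hasDerivWithinAt_nonneg (convex_Ici y)
      (f' := fun s => c - 1/(1+s^2))
    · exact (continuous_const.mul continuous_id).sub Real.continuous_arctan |>.continuousOn
    · intro s _
      simpa using (((hasDerivAt_id s).const_mul c).fun_sub (Real.hasDerivAt_arctan s)).hasDerivWithinAt
    · intro s hs
      rw [interior_Ici] at hs
      have := hc s hs.le
      linarith
  have := H Set.self_mem_Ici (Set.mem_Ici.mpr hxy) hxy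
  simp only at this
  nlinarith [this]

lemma my_abs_arctan_sub (x y : ℝ) : |Real.arctan x - Real.arctan y| ≤ |x - y| := by
  have key : ∀ u v : ℝ, v ≤ u → Real.arctan u - Real.arctan v ≤ u - v := by
    intro u v huv
    have := my_arctan_sub_le_mul huv (c := 1) (fun s _ => by
      rw [div_le_one (by positivity)]; nlinarith [sq_nonneg s])
    linarith
  rcases le_total y x with hxy | hxy
  · rw [abs_of_nonneg (by nlinarith [Real.arctan_strictMono.monotone hxy] : (0:ℝ) ≤ Real.arctan x - Real.arctan y), abs_of_nonneg (by linarith : (0:ℝ) ≤ x - y)]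
    exact key x y hxy
  · rw [abs_sub_comm, abs_sub_comm x y, abs_of_nonneg (by nlinarith [Real.arctan_strictMono.monotone hxy] : (0:ℝ) ≤ Real.arctan y - Real.arctan x), abs_of_nonneg (by linarith : (0:ℝ) ≤ y - x)]
    exact key y x hxy

lemma my_arctan_le_self {x : ℝ} (hx : 0 ≤ x) : Real.arctan x ≤ x := by
  have := my_abs_arctan_sub x 0
  simp [Real.arctan_zero, abs_of_nonneg hx] at this
  calc Real.arctan x ≤ |Real.arctan x| := le_abs_self _
  _ ≤ x := this

lemma my_II {g : ℝ → ℝ} {c : ℝ} (hg : Continuous g) (hb : ∀ t, |g t| ≤ c * |t|)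
    (A B : ℝ) : IntervalIntegrable (fun t => g t / t) volume A B := by
  have hc : 0 ≤ c := by have := hb 1; simp at this; exact le_trans (abs_nonneg _) this
  have meas : Measurable fun t : ℝ => g t / t := hg.measurable.div measurable_id
  have bound : ∀ t : ℝ, |g t / t| ≤ c := by
    intro t
    rcases eq_or_ne t 0 with rfl | ht
    · simpa using hc
    · rw [abs_div, div_le_iff₀ (abs_pos.mpr ht)]
      exact hb t
  exact (_root_.intervalIntegrable_const (c := c)).mono_fun meas.aestronglyMeasurable
    (Filter.Eventually.of_forall fun t => by
      show ‖g t / t‖ ≤ |c|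
      rw [Real.norm_eq_abs, abs_of_nonneg hc]
      exact bound t)

/-- The summand `θ_n(x)` for `n ≠ 0`. -/
noncomputable def thetaN (α : ℝ) (n : ℤ) (x : ℝ) : ℝ :=
  (1 / Real.pi) * ∫ t in (-(5/4) : ℝ)..(5/4 : ℝ),
    (Real.arctan (|(n : ℝ)| ^ α * (t + x - (n : ℝ))) -
      Real.arctan (|(n : ℝ)| ^ α * (x - (n : ℝ)))) / t

set_option maxHeartbeats 1000000 in
theorem stmt_17 (α : ℝ) (hα : α ∈ Set.Icc (0:ℝ) 2) :
    ∃ C > (0:ℝ), ∀ n : ℤ, n ≠ 0 → ∀ h : ℝ, h ∈ Set.Icc (0:ℝ) (1/2) →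
      |thetaN α n ((n : ℝ) + h) -
        (α * Real.log |(n : ℝ)| - Real.log (1 + |(n : ℝ)| ^ α * h))| ≤ C := by
  obtain ⟨hα0, hα2⟩ := hα
  refine ⟨10, by norm_num, ?_⟩
  intro n hn h hh
  obtain ⟨hh0, hh2⟩ := hh
  set a : ℝ := |(n:ℝ)| ^ α with ha
  have hn1 : (1:ℝ) ≤ |(n:ℝ)| := by
    rw [← Int.cast_abs]
    exact_mod_cast Int.one_le_abs hn
  have ha1 : (1:ℝ) ≤ a := Real.one_le_rpow hn1 hα0
  have ha0 : (0:ℝ) < a := lt_of_lt_of_le one_pos ha1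
  have hπ : (0:ℝ) < Real.pi := Real.pi_pos
  have hπ3 : (3:ℝ) < Real.pi := Real.pi_gt_three
  set F1 : ℝ → ℝ := fun t => (Real.arctan (a*(t+h)) - Real.arctan (a*h))/t with hF1def
  set ψ : ℝ → ℝ := fun t => (Real.arctan (a*(h+t)) - Real.arctan (a*(h-t)))/t with hψdef
  -- rewrite thetaN
  have hth : thetaN α n ((n:ℝ) + h)
      = (1/Real.pi) * ∫ t in (-(5/4):ℝ)..(5/4 : ℝ), F1 t := by
    unfold thetaN
    congr 1
    apply intervalIntegral.integral_congr
    intro t _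
    have e1 : t + ((n:ℝ)+h) - n = t + h := by ring
    have e2 : ((n:ℝ)+h) - n = h := by ring
    simp only [hF1def, ← ha, e1, e2]
  have hδ0 : (0:ℝ) < h + 1/a := by positivity
  -- rewrite the target
  have hlog : α * Real.log |(n:ℝ)| - Real.log (1 + a*h)
      = -Real.log (h + 1/a) := by
    have h1 : α * Real.log |(n:ℝ)| = Real.log a := (Real.log_rpow (by linarith) α).symm
    have h2 : h + 1/a = (1 + a*h)/a := by field_simp; ring
    rw [h1, h2, Real.log_div (by positivity) (ne_of_gt ha0)]
    ring
  rw [hth, hlog]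
  -- integrability
  have hF1int : ∀ A B : ℝ, IntervalIntegrable F1 volume A B := by
    intro A B
    apply my_II (c := a)
    · exact (Real.continuous_arctan.comp (continuous_const.mul
        (continuous_id.add continuous_const))).sub continuous_const
    · intro t
      calc |Real.arctan (a*(t+h)) - Real.arctan (a*h)| ≤ |a*(t+h) - a*h| :=
            my_abs_arctan_sub _ _
        _ = a * |t| := by
            rw [show a*(t+h) - a*h = a*t by ring, abs_mul, abs_of_pos ha0]
  have hψnum : ∀ t : ℝ, |Real.arctan (a*(h+t)) - Real.arctan (a*(h-t))| ≤ 2*a*|t| := by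
    intro t
    calc |Real.arctan (a*(h+t)) - Real.arctan (a*(h-t))| ≤ |a*(h+t) - a*(h-t)| :=
          my_abs_arctan_sub _ _
      _ = 2*a*|t| := by
          rw [show a*(h+t) - a*(h-t) = (2*a)*t by ring, abs_mul,
            abs_of_pos (by positivity : (0:ℝ) < 2*a)]
  have hψint : ∀ A B : ℝ, IntervalIntegrable ψ volume A B := by
    intro A B
    apply my_II (c := 2*a)
    · exact (Real.continuous_arctan.comp (continuous_const.mul
        (continuous_const.add continuous_id))).sub
        (Real.continuous_arctan.comp (continuous_const.mul
        (continuous_const.sub continuous_id)))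
    · exact hψnum
  have hψabs : ∀ t : ℝ, |ψ t| ≤ 2*a := by
    intro t
    rcases eq_or_ne t 0 with rfl | ht
    · simp only [hψdef, div_zero, abs_zero]
      positivity
    · simp only [hψdef]
      rw [abs_div, div_le_iff₀ (abs_pos.mpr ht)]
      exact hψnum t
  -- symmetrization
  have hcompeq : (fun s => F1 (-s)) = fun s => (Real.arctan (a*h) - Real.arctan (a*(h-s)))/s := by
    funext s
    simp only [hF1def]
    rw [show a*(-s+h) = a*(h-s) by ring, div_neg, ← neg_div, neg_sub]
  have hcomp : IntervalIntegrable (fun s => F1 (-s)) volume 0 (5/4) := by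
    rw [hcompeq]
    apply my_II (c := a)
    · exact continuous_const.sub (Real.continuous_arctan.comp (continuous_const.mul
        (continuous_const.sub continuous_id)))
    · intro t
      calc |Real.arctan (a*h) - Real.arctan (a*(h-t))| ≤ |a*h - a*(h-t)| :=
            my_abs_arctan_sub _ _
        _ = a * |t| := by
            rw [show a*h - a*(h-t) = a*t by ring, abs_mul, abs_of_pos ha0]
  have hsym : (∫ t in (-(5/4):ℝ)..(5/4:ℝ), F1 t) = ∫ t in (0:ℝ)..(5/4:ℝ), ψ t := by
    have hneg : (∫ t in (-(5/4):ℝ)..(0:ℝ), F1 t) = ∫ s in (0:ℝ)..(5/4:ℝ), F1 (-s) := by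
      rw [intervalIntegral.integral_comp_neg F1 (a := 0) (b := 5/4)]
      norm_num
    have hsplit := intervalIntegral.integral_add_adjacent_intervals
      (hF1int (-(5/4)) 0) (hF1int 0 (5/4))
    have hadd := intervalIntegral.integral_add hcomp (hF1int 0 (5/4))
    have hF2eq : ∀ s : ℝ, F1 (-s) + F1 s = ψ s := by
      intro s
      simp only [hF1def, hψdef]
      rw [show a*(-s+h) = a*(h-s) by ring, show a*(s+h) = a*(h+s) by ring, div_neg, ← neg_div,
        neg_sub, ← add_div]
      congr 1
      ring
    have : (∫ s in (0:ℝ)..(5/4:ℝ), (F1 (-s) + F1 s)) = ∫ t in (0:ℝ)..(5/4:ℝ), ψ t := by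
      apply intervalIntegral.integral_congr
      intro s _
      exact hF2eq s
    rw [← hsplit, hneg]
    rw [hadd] at this
    linarith [this]
  rw [hsym]
  -- nonnegativity of ψ on [0, ∞)
  have hψnn : ∀ t : ℝ, 0 ≤ t → 0 ≤ ψ t := by
    intro t ht
    rcases eq_or_lt_of_le ht with rfl | ht0
    · simp [hψdef]
    · apply div_nonneg _ ht0.le
      have : a*(h-t) ≤ a*(h+t) := by nlinarith
      have := Real.arctan_strictMono.monotone this
      linarith
  rcases le_or_gt a 2 with hA | hA
  · -- small a : crude bound
    have hJ : ‖∫ t in (0:ℝ)..(5/4:ℝ), ψ t‖ ≤ 2*a * |(5/4:ℝ) - 0| := by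
      apply intervalIntegral.norm_integral_le_of_norm_le_const
      intro x _
      rw [Real.norm_eq_abs]
      exact hψabs x
    rw [Real.norm_eq_abs] at hJ
    have hJ' : |∫ t in (0:ℝ)..(5/4:ℝ), ψ t| ≤ 5 := by
      rw [show |(5/4:ℝ) - 0| = 5/4 by norm_num] at hJ
      nlinarith
    have hδlb : (1:ℝ)/2 ≤ h + 1/a := by
      have : (1:ℝ)/2 ≤ 1/a := by
        rw [div_le_div_iff₀ (by norm_num) ha0]
        linarith
      linarith
    have hδub : h + 1/a ≤ 2 := by
      have : 1/a ≤ (1:ℝ) := by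
        rw [div_le_one ha0]; exact ha1
      linarith
    have hlub : Real.log (h + 1/a) ≤ 1 := by
      calc Real.log (h + 1/a) ≤ Real.log 2 := by
            rw [Real.log_le_log_iff hδ0 (by norm_num)]; exact hδub
        _ ≤ 1 := by linarith [Real.log_le_sub_one_of_pos (by norm_num : (0:ℝ) < 2)]
    have hllb : -1 ≤ Real.log (h + 1/a) := by
      have h2 : Real.log (1/2) ≤ Real.log (h + 1/a) := by
        rw [Real.log_le_log_iff (by norm_num) hδ0]; exact hδlb
      have h3 : Real.log (1/2) = -Real.log 2 := by
        rw [one_div, Real.log_inv]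
      have h4 : Real.log 2 ≤ 1 := by
        linarith [Real.log_le_sub_one_of_pos (by norm_num : (0:ℝ) < 2)]
      linarith
    rw [sub_neg_eq_add]
    rw [abs_le]
    have habs := abs_le.mp hJ'
    have hfrac : 1/Real.pi ≤ 1/3 := by
      rw [div_le_div_iff₀ hπ (by norm_num)]
      linarith
    have hfrac0 : 0 < 1/Real.pi := by positivity
    constructor
    · nlinarith [habs.1, habs.2]
    · nlinarith [habs.1, habs.2]
  · -- main case : a > 2
    set δ : ℝ := h + 1/a with hδdef
    have hia : 1/a < 1/2 := by
      rw [div_lt_div_iff₀ ha0 (by norm_num)]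
      linarith
    have hδT : δ ≤ 5/4 := by
      simp only [hδdef]; linarith
    have hhδ : h < δ := by
      simp only [hδdef]; linarith [one_div_pos.mpr ha0]
    have hδpos : 0 < δ := hδ0
    -- split the integral
    have hs1 : (∫ t in (0:ℝ)..(5/4:ℝ), ψ t)
        = (∫ t in (0:ℝ)..h, ψ t) + (∫ t in h..δ, ψ t) + ∫ t in δ..(5/4:ℝ), ψ t := by
      have e1 := intervalIntegral.integral_add_adjacent_intervals (hψint 0 h) (hψint h δ)
      have e2 := intervalIntegral.integral_add_adjacent_intervals (hψint 0 δ) (hψint δ (5/4))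
      linarith
    -- Bound 1 : ∫_0^h ψ ≤ π
    have hB1 : (∫ t in (0:ℝ)..h, ψ t) ≤ Real.pi := by
      have hcont : Continuous fun t : ℝ => 2*a/(1+(a*(h-t))^2) := by
        apply continuous_const.div
        · exact continuous_const.add
            ((continuous_const.mul (continuous_const.sub continuous_id)).pow 2)
        · intro t; positivity
      have hcmp : (∫ t in (0:ℝ)..h, ψ t) ≤ ∫ t in (0:ℝ)..h, 2*a/(1+(a*(h-t))^2) := by
        apply intervalIntegral.integral_mono_on hh0 (hψint 0 h) (hcont.intervalIntegrable 0 h)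
        intro t ht
        obtain ⟨ht0, hth⟩ := ht
        rcases eq_or_lt_of_le ht0 with rfl | ht0'
        · simp only [hψdef, div_zero]
          positivity
        · simp only [hψdef]
          have hy0 : 0 ≤ a*(h-t) := by nlinarith
          have hxy : a*(h-t) ≤ a*(h+t) := by nlinarith
          have hden : (0:ℝ) < 1+(a*(h-t))^2 := by positivity
          have key := my_arctan_sub_le_mul hxy (c := 1/(1+(a*(h-t))^2)) ?hc
          · rw [div_le_div_iff₀ ht0' hden]
            have e3 : a*(h+t) - a*(h-t) = 2*a*t := by ring
            rw [e3] at key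
            have : 1/(1+(a*(h-t))^2) * (2*a*t) * (1+(a*(h-t))^2) = 2*a*t := by
              field_simp
            nlinarith [key, hden]
          case hc =>
            intro s hs
            have hs2 : (a*(h-t))^2 ≤ s^2 := by nlinarith
            apply div_le_div_of_nonneg_left (by norm_num) hden
            linarith
      have hcalc : (∫ t in (0:ℝ)..h, 2*a/(1+(a*(h-t))^2)) = 2*Real.arctan (a*h) := by
        have hD : ∀ t ∈ Set.uIcc (0:ℝ) h,
            HasDerivAt (fun u => -2*Real.arctan (a*(h-u))) (2*a/(1+(a*(h-t))^2)) t := by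
          intro t _
          have hu : HasDerivAt (fun u : ℝ => a*(h-u)) (-a) t := by
            simpa using ((hasDerivAt_id t).const_sub h).const_mul a
          have h2 : HasDerivAt (fun u : ℝ => Real.arctan (a*(h-u)))
              (1/(1+(a*(h-t))^2) * (-a)) t := hu.arctan
          have h3 := h2.const_mul (-2 : ℝ)
          exact h3.congr_deriv (by ring)
        rw [intervalIntegral.integral_eq_sub_of_hasDerivAt hD (hcont.intervalIntegrable 0 h)]
        norm_num
      have := Real.arctan_lt_pi_div_two (a*h)
      linarith
    -- Bound 2 : ∫_h^δ ψ ≤ 2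
    have hB2 : (∫ t in h..δ, ψ t) ≤ 2 := by
      have hcmp : (∫ t in h..δ, ψ t) ≤ ∫ t in h..δ, (fun _ : ℝ => 2*a) t := by
        apply intervalIntegral.integral_mono_on hhδ.le (hψint h δ)
          (continuous_const.intervalIntegrable _ _)
        intro t ht
        obtain ⟨hth, htδ⟩ := ht
        have ht0 : 0 ≤ t := le_trans hh0 hth
        rcases eq_or_lt_of_le ht0 with rfl | ht0'
        · simp only [hψdef, div_zero]
          positivity
        · simp only [hψdef]
          have hxy : a*(h-t) ≤ a*(h+t) := by nlinarith
          have key := my_arctan_sub_le_mul hxy (c := 1) ?hc1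
          · rw [div_le_iff₀ ht0']
            nlinarith [key]
          case hc1 =>
            intro s _
            rw [div_le_one (by positivity)]
            nlinarith [sq_nonneg s]
      have : (∫ t in h..δ, (fun _ : ℝ => 2*a) t) = 2 := by
        rw [intervalIntegral.integral_const]
        simp only [smul_eq_mul, hδdef]
        field_simp
        ring
      linarith
    -- Bound 3 upper : ∫_δ^T ψ ≤ π (log (5/4) - log δ)
    have hlogTδ : (∫ t in δ..(5/4:ℝ), Real.pi * (1/t))
        = Real.pi * (Real.log (5/4) - Real.log δ) := by
      rw [intervalIntegral.integral_const_mul, integral_one_div]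
      · rw [Real.log_div (by norm_num) (ne_of_gt hδpos)]
      · intro hmem
        rw [Set.mem_uIcc] at hmem
        rcases hmem with ⟨h1, _⟩ | ⟨_, h2⟩ <;> linarith
    have hinv_cont : ContinuousOn (fun t : ℝ => Real.pi * (1/t)) (Set.uIcc δ (5/4)) := by
      apply ContinuousOn.mul continuousOn_const
      apply ContinuousOn.div continuousOn_const continuousOn_id
      intro t ht
      rw [Set.uIcc_of_le hδT] at ht
      simp only [id_eq]
      exact ne_of_gt (lt_of_lt_of_le hδpos ht.1)
    have hB3u : (∫ t in δ..(5/4:ℝ), ψ t) ≤ Real.pi * (Real.log (5/4) - Real.log δ) := by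
      rw [← hlogTδ]
      apply intervalIntegral.integral_mono_on hδT (hψint δ (5/4))
        (hinv_cont.intervalIntegrable)
      intro t ht
      obtain ⟨htδ, htT⟩ := ht
      have ht0 : 0 < t := lt_of_lt_of_le hδpos htδ
      simp only [hψdef]
      rw [mul_one_div, div_le_div_iff₀ ht0 ht0]
      have h1 := Real.arctan_lt_pi_div_two (a*(h+t))
      have h2 := Real.neg_pi_div_two_lt_arctan (a*(h-t))
      nlinarith
    -- Bound 3 lower
    have htmh : ∀ t : ℝ, δ ≤ t → 1/a ≤ t - h := by
      intro t ht
      simp only [hδdef] at ht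
      linarith
    have hB3l : Real.pi * (Real.log (5/4) - Real.log δ) - 2 ≤ ∫ t in δ..(5/4:ℝ), ψ t := by
      have hLcont : ContinuousOn (fun t : ℝ => Real.pi * (1/t) - 2/(a*(t-h)^2))
          (Set.uIcc δ (5/4)) := by
        apply ContinuousOn.sub hinv_cont
        apply ContinuousOn.div continuousOn_const
        · apply ContinuousOn.mul continuousOn_const
          apply ContinuousOn.pow
          exact (continuousOn_id.sub continuousOn_const)
        · intro t ht
          rw [Set.uIcc_of_le hδT] at ht
          have h1 : 1/a ≤ t - h := htmh t ht.1
          have h2 : 0 < t - h := lt_of_lt_of_le (by positivity) h1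
          positivity
      have hcmp : (∫ t in δ..(5/4:ℝ), (fun t : ℝ => Real.pi * (1/t) - 2/(a*(t-h)^2)) t)
          ≤ ∫ t in δ..(5/4:ℝ), ψ t := by
        apply intervalIntegral.integral_mono_on hδT hLcont.intervalIntegrable (hψint δ (5/4))
        intro t ht
        obtain ⟨htδ, htT⟩ := ht
        have ht0 : 0 < t := lt_of_lt_of_le hδpos htδ
        have hd1 : 1/a ≤ t - h := htmh t htδ
        have hd0 : 0 < t - h := lt_of_lt_of_le (by positivity) hd1
        have hht : 0 < a*(h+t) := by positivity
        have u1 : Real.pi/2 - Real.arctan (a*(h+t)) ≤ 1/(a*(t-h)) := by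
          have e := Real.arctan_inv_of_pos hht
          have le1 : Real.arctan ((a*(h+t))⁻¹) ≤ (a*(h+t))⁻¹ :=
            my_arctan_le_self (by positivity)
          have le2 : (a*(h+t))⁻¹ ≤ 1/(a*(t-h)) := by
            rw [inv_eq_one_div]
            apply div_le_div_of_nonneg_left (by norm_num) (by positivity)
            nlinarith
          rw [← e]
          exact le1.trans le2
        have u2 : Real.pi/2 + Real.arctan (a*(h-t)) ≤ 1/(a*(t-h)) := by
          have e0 : a*(h-t) = -(a*(t-h)) := by ring
          rw [e0, Real.arctan_neg]
          have e := Real.arctan_inv_of_pos (show 0 < a*(t-h) by positivity)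
          have le1 : Real.arctan ((a*(t-h))⁻¹) ≤ (a*(t-h))⁻¹ :=
            my_arctan_le_self (by positivity)
          have key2 : Real.pi/2 - Real.arctan (a*(t-h)) ≤ (a*(t-h))⁻¹ := by
            rw [← e]; exact le1
          rw [inv_eq_one_div] at key2
          linarith
        -- ψ t ≥ (π - 2/(a*(t-h)))/t ≥ π/t - 2/(a*(t-h)^2)
        have hφ : Real.pi - 2/(a*(t-h)) ≤ Real.arctan (a*(h+t)) - Real.arctan (a*(h-t)) := by
          have : 2/(a*(t-h)) = 1/(a*(t-h)) + 1/(a*(t-h)) := by ring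
          linarith
        simp only [hψdef]
        have step1 : (Real.pi - 2/(a*(t-h)))/t
            ≤ (Real.arctan (a*(h+t)) - Real.arctan (a*(h-t)))/t := by
          rw [div_le_div_iff₀ ht0 ht0]
          nlinarith [hφ]
        have e1 : (Real.pi - 2/(a*(t-h)))/t = Real.pi/t - 2/(a*(t-h)*t) := by
          field_simp
        have e2 : 2/(a*(t-h)*t) ≤ 2/(a*(t-h)^2) := by
          apply div_le_div_of_nonneg_left (by norm_num) (by positivity)
          nlinarith [mul_nonneg (mul_nonneg ha0.le hd0.le) hh0]
        have e3 : Real.pi * (1/t) = Real.pi/t := by ring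
        linarith [step1, e2]
      have hGcont : ContinuousOn (fun t : ℝ => 2/(a*(t-h)^2)) (Set.uIcc δ (5/4)) := by
        apply ContinuousOn.div continuousOn_const
        · apply ContinuousOn.mul continuousOn_const
          exact (continuousOn_id.sub continuousOn_const).pow 2
        · intro t ht
          rw [Set.uIcc_of_le hδT] at ht
          have h1 : 1/a ≤ t - h := htmh t ht.1
          have h2 : 0 < t - h := lt_of_lt_of_le (by positivity) h1
          positivity
      have hsub : (∫ t in δ..(5/4:ℝ), (fun t : ℝ => Real.pi * (1/t) - 2/(a*(t-h)^2)) t)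
          = (∫ t in δ..(5/4:ℝ), Real.pi * (1/t)) - ∫ t in δ..(5/4:ℝ), 2/(a*(t-h)^2) :=
        intervalIntegral.integral_sub hinv_cont.intervalIntegrable hGcont.intervalIntegrable
      have hI2 : (∫ t in δ..(5/4:ℝ), 2/(a*(t-h)^2)) ≤ 2 := by
        have hD : ∀ t ∈ Set.uIcc δ (5/4:ℝ),
            HasDerivAt (fun u : ℝ => -2/a * (u-h)⁻¹) (2/(a*(t-h)^2)) t := by
          intro t ht
          rw [Set.uIcc_of_le hδT] at ht
          have h1 : 1/a ≤ t - h := htmh t ht.1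
          have h2 : 0 < t - h := lt_of_lt_of_le (by positivity) h1
          have hu : HasDerivAt (fun u : ℝ => u - h) 1 t := (hasDerivAt_id t).sub_const h
          have hinv := hu.inv (ne_of_gt h2)
          have h3 := hinv.const_mul (-2/a)
          exact h3.congr_deriv (by field_simp)
        rw [intervalIntegral.integral_eq_sub_of_hasDerivAt hD hGcont.intervalIntegrable]
        have hδh' : δ - h = 1/a := by simp only [hδdef]; ring
        rw [hδh']
        have h54 : (0:ℝ) < 5/4 - h := by linarith
        have e4 : -2/a * (1/a)⁻¹ = -2 := by field_simp
        rw [e4]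
        have e5 : -2/a * (5/4 - h)⁻¹ = -(2/a * (5/4 - h)⁻¹) := by ring
        have e6 : (0:ℝ) ≤ 2/a * (5/4 - h)⁻¹ := by positivity
        linarith
      rw [hsub, hlogTδ] at hcmp
      linarith
    -- assemble
    have hψ01 : 0 ≤ ∫ t in (0:ℝ)..h, ψ t :=
      intervalIntegral.integral_nonneg hh0 (fun u hu => hψnn u hu.1)
    have hψ02 : 0 ≤ ∫ t in h..δ, ψ t :=
      intervalIntegral.integral_nonneg hhδ.le (fun u hu => hψnn u (le_trans hh0 hu.1))
    have hJup : (∫ t in (0:ℝ)..(5/4:ℝ), ψ t)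
        ≤ Real.pi + 2 + Real.pi * (Real.log (5/4) - Real.log δ) := by
      rw [hs1]; linarith
    have hJlo : Real.pi * (Real.log (5/4) - Real.log δ) - 2
        ≤ ∫ t in (0:ℝ)..(5/4:ℝ), ψ t := by
      rw [hs1]; linarith
    rw [sub_neg_eq_add, abs_le]
    have hfrac : 1/Real.pi ≤ 1/3 := by
      rw [div_le_div_iff₀ hπ (by norm_num)]
      linarith
    have hfrac0 : 0 < 1/Real.pi := by positivity
    have hlog54a : 0 ≤ Real.log (5/4) := Real.log_nonneg (by norm_num)
    have hlog54b : Real.log (5/4) ≤ 1/4 := by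
      linarith [Real.log_le_sub_one_of_pos (show (0:ℝ) < 5/4 by norm_num)]
    have hup := mul_le_mul_of_nonneg_left hJup hfrac0.le
    have hlo := mul_le_mul_of_nonneg_left hJlo hfrac0.le
    have hππ : 1/Real.pi * Real.pi = 1 := one_div_mul_cancel (ne_of_gt hπ)
    have heup : 1/Real.pi * (Real.pi + 2 + Real.pi * (Real.log (5/4) - Real.log δ))
        = 1 + 2*(1/Real.pi) + (Real.log (5/4) - Real.log δ) := by
      calc 1/Real.pi * (Real.pi + 2 + Real.pi * (Real.log (5/4) - Real.log δ))
          = (1/Real.pi * Real.pi) + 2*(1/Real.pi)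
            + (1/Real.pi * Real.pi)*(Real.log (5/4) - Real.log δ) := by ring
        _ = 1 + 2*(1/Real.pi) + (Real.log (5/4) - Real.log δ) := by rw [hππ]; ring
    have helo : 1/Real.pi * (Real.pi * (Real.log (5/4) - Real.log δ) - 2)
        = (Real.log (5/4) - Real.log δ) - 2*(1/Real.pi) := by
      calc 1/Real.pi * (Real.pi * (Real.log (5/4) - Real.log δ) - 2)
          = (1/Real.pi * Real.pi)*(Real.log (5/4) - Real.log δ) - 2*(1/Real.pi) := by ring
        _ = (Real.log (5/4) - Real.log δ) - 2*(1/Real.pi) := by rw [hππ]; ring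
    rw [heup] at hup
    rw [helo] at hlo
    constructor
    · linarith only [hlo, hlog54a, hfrac, hfrac0]
    · linarith only [hup, hlog54b, hfrac, hfrac0]
end
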